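/- arXiv:2205.15499 — 6 statements merged into one kernel-verified Lean document; each statement's English description precedes it below -/
import Mathlib

section
/- Assume the integrability condition ∫₁^∞ log(1+z) μ(dz) + ∫₁^∞ log(1+z) ν(dz) < ∞, and set V_log(x) = log(1+x). Then for every x ≥ 0 the integrals in LV_log(x) = −c/(1+x)² + x∫₀^∞[log(1+z/(1+x)) − (z/(1+x))1_{z≤1}]μ(dz) + (β − bx − g(x))/(1+x) + ∫₀^∞ log(1+z/(1+x))ν(dz) converge, and the following are equivalent: (i) V_log is a Lyapunov function, i.e. there exist constants C₀ > 0 and C₁ > 0 such that LV_log(x) ≤ C₀ − C₁ log(1+x) for all x ≥ 0; (ii) liminf_{x→∞} { g(x)/(x log x) − (x/log x)∫₁^∞ log(1 + z/(1+x)) μ(dz) } > 0. -/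
open MeasureTheory Filter Set

private lemma intOn_of_lint {μ : MeasureTheory.Measure ℝ} {s : Set ℝ} {f : ℝ → ℝ}
    (hmeas : Measurable f) (hs : MeasurableSet s) (h0 : ∀ z ∈ s, 0 ≤ f z)
    (h : ∫⁻ z in s, ENNReal.ofReal (f z) ∂μ < ⊤) : MeasureTheory.IntegrableOn f s μ := by
  refine ⟨hmeas.aestronglyMeasurable.restrict, ?_⟩
  rw [MeasureTheory.hasFiniteIntegral_iff_ofReal
    ((MeasureTheory.ae_restrict_iff' hs).2 (Filter.Eventually.of_forall h0))]
  exact h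

private lemma log_one_add_le {u : ℝ} (hu : 0 ≤ u) : Real.log (1 + u) ≤ u := by
  have := Real.log_le_sub_one_of_pos (show (0:ℝ) < 1 + u by linarith)
  linarith

private lemma le_log_one_add {u : ℝ} (hu : 0 ≤ u) : u - u ^ 2 ≤ Real.log (1 + u) := by
  have h1 : (0:ℝ) < 1 + u := by linarith
  have h2 := Real.log_le_sub_one_of_pos (show (0:ℝ) < (1+u)⁻¹ by positivity)
  rw [Real.log_inv] at h2
  have h4 : (1+u)⁻¹ ≤ 1 - u + u^2 := by
    rw [inv_eq_one_div, div_le_iff₀ h1]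
    nlinarith [mul_nonneg (mul_nonneg hu hu) hu]
  linarith

private lemma log3_ge_one : (1:ℝ) ≤ Real.log 3 := by
  rw [Real.le_log_iff_exp_le (by norm_num)]
  have := Real.exp_one_lt_d9
  linarith

private lemma FmeasAux (x : ℝ) :
    Measurable (fun z : ℝ => Real.log (1 + z / (1 + x)) - (z / (1 + x)) * (if z ≤ 1 then (1:ℝ) else 0)) :=
  (Real.measurable_log.comp (measurable_const.add (measurable_id.div_const (1+x)))).sub
    ((measurable_id.div_const (1+x)).mul
      (Measurable.ite measurableSet_Iic measurable_const measurable_const))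

private lemma GmeasAux (x : ℝ) : Measurable (fun z : ℝ => Real.log (1 + z / (1 + x))) :=
  Real.measurable_log.comp (measurable_const.add (measurable_id.div_const (1+x)))

-- basic integrable bounds from the lintegral hypotheses
private lemma int_sq_mu {μ : MeasureTheory.Measure ℝ}
    (hμloc : ∫⁻ z, ENNReal.ofReal (min 1 (z ^ 2)) ∂μ < ⊤) :
    MeasureTheory.IntegrableOn (fun z : ℝ => z ^ 2) (Set.Ioc 0 1) μ := by
  refine intOn_of_lint (measurable_id.pow_const 2) measurableSet_Ioc (fun z _ => sq_nonneg z) ?_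
  have heq : ∫⁻ z in Set.Ioc (0:ℝ) 1, ENNReal.ofReal (z ^ 2) ∂μ
      = ∫⁻ z in Set.Ioc (0:ℝ) 1, ENNReal.ofReal (min 1 (z ^ 2)) ∂μ := by
    refine MeasureTheory.setLIntegral_congr_fun measurableSet_Ioc
      (fun z hz => ?_)
    rw [min_eq_right]
    nlinarith [hz.1, hz.2]
  rw [heq]
  exact lt_of_le_of_lt (MeasureTheory.setLIntegral_le_lintegral _ _) hμloc

private lemma int_id_nu {ν : MeasureTheory.Measure ℝ}
    (hνloc : ∫⁻ z, ENNReal.ofReal (min 1 z) ∂ν < ⊤) :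
    MeasureTheory.IntegrableOn (fun z : ℝ => z) (Set.Ioc 0 1) ν := by
  refine intOn_of_lint measurable_id measurableSet_Ioc (fun z hz => hz.1.le) ?_
  have heq : ∫⁻ z in Set.Ioc (0:ℝ) 1, ENNReal.ofReal z ∂ν
      = ∫⁻ z in Set.Ioc (0:ℝ) 1, ENNReal.ofReal (min 1 z) ∂ν := by
    refine MeasureTheory.setLIntegral_congr_fun measurableSet_Ioc
      (fun z hz => ?_)
    rw [min_eq_right hz.2]
  rw [heq]
  exact lt_of_le_of_lt (MeasureTheory.setLIntegral_le_lintegral _ _) hνloc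

private lemma int_log_tail {μ : MeasureTheory.Measure ℝ}
    (hμlog : ∫⁻ z in Set.Ioi (1:ℝ), ENNReal.ofReal (Real.log (1 + z)) ∂μ < ⊤) :
    MeasureTheory.IntegrableOn (fun z : ℝ => Real.log (1 + z)) (Set.Ioi 1) μ := by
  exact intOn_of_lint
    (Real.measurable_log.comp (measurable_const.add measurable_id)) measurableSet_Ioi
    (fun z hz => Real.log_nonneg (by linarith [hz.out])) hμlog

private lemma int_log_head {ν : MeasureTheory.Measure ℝ}
    (hνloc : ∫⁻ z, ENNReal.ofReal (min 1 z) ∂ν < ⊤) :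
    MeasureTheory.IntegrableOn (fun z : ℝ => Real.log (1 + z)) (Set.Ioc 0 1) ν := by
  refine (int_id_nu hνloc).mono'
    (Real.measurable_log.comp (measurable_const.add measurable_id)).aestronglyMeasurable.restrict ?_
  refine (MeasureTheory.ae_restrict_iff' measurableSet_Ioc).2
    (Filter.Eventually.of_forall fun z hz => ?_)
  rw [Real.norm_eq_abs, abs_of_nonneg (Real.log_nonneg (by linarith [hz.1]))]
  exact log_one_add_le hz.1.le

private lemma Fint_head {μ : MeasureTheory.Measure ℝ}
    (hμloc : ∫⁻ z, ENNReal.ofReal (min 1 (z ^ 2)) ∂μ < ⊤) {x : ℝ} (hx : 0 ≤ x) :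
    MeasureTheory.IntegrableOn
      (fun z => Real.log (1 + z / (1 + x)) - (z / (1 + x)) * (if z ≤ 1 then 1 else 0))
      (Set.Ioc 0 1) μ := by
  have hax : (0:ℝ) < 1 + x := by linarith
  refine (int_sq_mu hμloc).mono' (FmeasAux x).aestronglyMeasurable.restrict ?_
  refine (MeasureTheory.ae_restrict_iff' measurableSet_Ioc).2
    (Filter.Eventually.of_forall fun z hz => ?_)
  have hu0 : 0 ≤ z / (1 + x) := div_nonneg hz.1.le hax.le
  have huz : z / (1 + x) ≤ z := div_le_self hz.1.le (by linarith)
  have h1 := log_one_add_le hu0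
  have h2 := le_log_one_add hu0
  rw [if_pos hz.2, mul_one, Real.norm_eq_abs, abs_le]
  constructor <;> nlinarith [hz.1.le, sq_nonneg z]

private lemma Fint_tail {μ : MeasureTheory.Measure ℝ}
    (hμlog : ∫⁻ z in Set.Ioi (1:ℝ), ENNReal.ofReal (Real.log (1 + z)) ∂μ < ⊤) {x : ℝ} (hx : 0 ≤ x) :
    MeasureTheory.IntegrableOn
      (fun z => Real.log (1 + z / (1 + x)) - (z / (1 + x)) * (if z ≤ 1 then 1 else 0))
      (Set.Ioi 1) μ := by
  have hax : (0:ℝ) < 1 + x := by linarith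
  refine (int_log_tail hμlog).mono' (FmeasAux x).aestronglyMeasurable.restrict ?_
  refine (MeasureTheory.ae_restrict_iff' measurableSet_Ioi).2
    (Filter.Eventually.of_forall fun z hz => ?_)
  have hz1 : (1:ℝ) < z := hz
  have hu0 : 0 ≤ z / (1 + x) := div_nonneg (by linarith) hax.le
  have huz : z / (1 + x) ≤ z := div_le_self (by linarith) (by linarith)
  rw [if_neg (not_le.2 hz1), mul_zero, sub_zero, Real.norm_eq_abs,
    abs_of_nonneg (Real.log_nonneg (by linarith))]
  exact Real.log_le_log (by linarith) (by linarith)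

private lemma Gint_tail {μ : MeasureTheory.Measure ℝ}
    (hμlog : ∫⁻ z in Set.Ioi (1:ℝ), ENNReal.ofReal (Real.log (1 + z)) ∂μ < ⊤) {x : ℝ} (hx : 0 ≤ x) :
    MeasureTheory.IntegrableOn (fun z => Real.log (1 + z / (1 + x))) (Set.Ioi 1) μ := by
  have hax : (0:ℝ) < 1 + x := by linarith
  refine (int_log_tail hμlog).mono' (GmeasAux x).aestronglyMeasurable.restrict ?_
  refine (MeasureTheory.ae_restrict_iff' measurableSet_Ioi).2
    (Filter.Eventually.of_forall fun z hz => ?_)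
  have hz1 : (1:ℝ) < z := hz
  have hu0 : 0 ≤ z / (1 + x) := div_nonneg (by linarith) hax.le
  have huz : z / (1 + x) ≤ z := div_le_self (by linarith) (by linarith)
  rw [Real.norm_eq_abs, abs_of_nonneg (Real.log_nonneg (by linarith))]
  exact Real.log_le_log (by linarith) (by linarith)

private lemma Gint_head {ν : MeasureTheory.Measure ℝ}
    (hνloc : ∫⁻ z, ENNReal.ofReal (min 1 z) ∂ν < ⊤) {x : ℝ} (hx : 0 ≤ x) :
    MeasureTheory.IntegrableOn (fun z => Real.log (1 + z / (1 + x))) (Set.Ioc 0 1) ν := by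
  have hax : (0:ℝ) < 1 + x := by linarith
  refine (int_id_nu hνloc).mono' (GmeasAux x).aestronglyMeasurable.restrict ?_
  refine (MeasureTheory.ae_restrict_iff' measurableSet_Ioc).2
    (Filter.Eventually.of_forall fun z hz => ?_)
  have hu0 : 0 ≤ z / (1 + x) := div_nonneg hz.1.le hax.le
  have huz : z / (1 + x) ≤ z := div_le_self hz.1.le (by linarith)
  rw [Real.norm_eq_abs, abs_of_nonneg (Real.log_nonneg (by linarith))]
  linarith [log_one_add_le hu0]

private lemma Gint_all {ν : MeasureTheory.Measure ℝ}
    (hνloc : ∫⁻ z, ENNReal.ofReal (min 1 z) ∂ν < ⊤)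
    (hνlog : ∫⁻ z in Set.Ioi (1:ℝ), ENNReal.ofReal (Real.log (1 + z)) ∂ν < ⊤) {x : ℝ} (hx : 0 ≤ x) :
    MeasureTheory.IntegrableOn (fun z => Real.log (1 + z / (1 + x))) (Set.Ioi 0) ν := by
  rw [← Set.Ioc_union_Ioi_eq_Ioi (zero_le_one (α := ℝ))]
  exact (Gint_head hνloc hx).union (Gint_tail hνlog hx)

private lemma Fint_all {μ : MeasureTheory.Measure ℝ}
    (hμloc : ∫⁻ z, ENNReal.ofReal (min 1 (z ^ 2)) ∂μ < ⊤)
    (hμlog : ∫⁻ z in Set.Ioi (1:ℝ), ENNReal.ofReal (Real.log (1 + z)) ∂μ < ⊤) {x : ℝ} (hx : 0 ≤ x) :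
    MeasureTheory.IntegrableOn
      (fun z => Real.log (1 + z / (1 + x)) - (z / (1 + x)) * (if z ≤ 1 then 1 else 0))
      (Set.Ioi 0) μ := by
  rw [← Set.Ioc_union_Ioi_eq_Ioi (zero_le_one (α := ℝ))]
  exact (Fint_head hμloc hx).union (Fint_tail hμlog hx)

private lemma int_log_all {ν : MeasureTheory.Measure ℝ}
    (hνloc : ∫⁻ z, ENNReal.ofReal (min 1 z) ∂ν < ⊤)
    (hνlog : ∫⁻ z in Set.Ioi (1:ℝ), ENNReal.ofReal (Real.log (1 + z)) ∂ν < ⊤) :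
    MeasureTheory.IntegrableOn (fun z : ℝ => Real.log (1 + z)) (Set.Ioi 0) ν := by
  rw [← Set.Ioc_union_Ioi_eq_Ioi (zero_le_one (α := ℝ))]
  exact (int_log_head hνloc).union (int_log_tail hνlog)

private lemma Fdecomp {μ : MeasureTheory.Measure ℝ}
    (hμloc : ∫⁻ z, ENNReal.ofReal (min 1 (z ^ 2)) ∂μ < ⊤)
    (hμlog : ∫⁻ z in Set.Ioi (1:ℝ), ENNReal.ofReal (Real.log (1 + z)) ∂μ < ⊤) {x : ℝ} (hx : 0 ≤ x) :
    (∫ z in Set.Ioi (0:ℝ),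
        (Real.log (1 + z / (1 + x)) - (z / (1 + x)) * (if z ≤ 1 then 1 else 0)) ∂μ)
      = (∫ z in Set.Ioc (0:ℝ) 1,
          (Real.log (1 + z / (1 + x)) - (z / (1 + x)) * (if z ≤ 1 then 1 else 0)) ∂μ)
        + ∫ z in Set.Ioi (1:ℝ), Real.log (1 + z / (1 + x)) ∂μ := by
  rw [← Set.Ioc_union_Ioi_eq_Ioi (zero_le_one (α := ℝ)),
    MeasureTheory.setIntegral_union (Set.Ioc_disjoint_Ioi le_rfl) measurableSet_Ioi
      (Fint_head hμloc hx) (Fint_tail hμlog hx)]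
  congr 1
  refine MeasureTheory.setIntegral_congr_fun measurableSet_Ioi (fun z hz => ?_)
  rw [if_neg (not_le.2 hz.out), mul_zero, sub_zero]

private lemma Jbounds {μ : MeasureTheory.Measure ℝ}
    (hμloc : ∫⁻ z, ENNReal.ofReal (min 1 (z ^ 2)) ∂μ < ⊤) {x : ℝ} (hx : 0 ≤ x) :
    -(∫ z in Set.Ioc (0:ℝ) 1, z ^ 2 ∂μ)
        ≤ x * (∫ z in Set.Ioc (0:ℝ) 1,
            (Real.log (1 + z / (1 + x)) - (z / (1 + x)) * (if z ≤ 1 then 1 else 0)) ∂μ)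
      ∧ x * (∫ z in Set.Ioc (0:ℝ) 1,
            (Real.log (1 + z / (1 + x)) - (z / (1 + x)) * (if z ≤ 1 then 1 else 0)) ∂μ) ≤ 0 := by
  have hax : (0:ℝ) < 1 + x := by linarith
  have hM₁ : 0 ≤ ∫ z in Set.Ioc (0:ℝ) 1, z ^ 2 ∂μ :=
    MeasureTheory.setIntegral_nonneg measurableSet_Ioc (fun z _ => sq_nonneg z)
  constructor
  · have hlow : (∫ z in Set.Ioc (0:ℝ) 1, (-(z ^ 2) / (1+x)^2) ∂μ)
        ≤ ∫ z in Set.Ioc (0:ℝ) 1,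
            (Real.log (1 + z / (1 + x)) - (z / (1 + x)) * (if z ≤ 1 then 1 else 0)) ∂μ := by
      refine MeasureTheory.setIntegral_mono_on ((int_sq_mu hμloc).neg.div_const _)
        (Fint_head hμloc hx) measurableSet_Ioc (fun z hz => ?_)
      have hu0 : 0 ≤ z / (1 + x) := div_nonneg hz.1.le hax.le
      have h2 := le_log_one_add hu0
      rw [if_pos hz.2, mul_one]
      have hpow : (z / (1+x))^2 = z^2 / (1+x)^2 := div_pow z (1+x) 2
      rw [neg_div]
      linarith [h2, hpow]
    have heval : (∫ z in Set.Ioc (0:ℝ) 1, (-(z ^ 2) / (1+x)^2) ∂μ)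
        = -(∫ z in Set.Ioc (0:ℝ) 1, z ^ 2 ∂μ) / (1+x)^2 := by
      rw [MeasureTheory.integral_div, MeasureTheory.integral_neg]
    rw [heval] at hlow
    have := mul_le_mul_of_nonneg_left hlow hx
    refine le_trans ?_ this
    rw [div_eq_mul_inv, neg_mul, mul_neg, neg_le_neg_iff]
    have h1 : x * ((1+x)^2)⁻¹ ≤ 1 := by
      rw [← div_eq_mul_inv, div_le_one (by positivity)]; nlinarith
    calc x * ((∫ z in Set.Ioc (0:ℝ) 1, z ^ 2 ∂μ) * ((1+x)^2)⁻¹)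
        = (x * ((1+x)^2)⁻¹) * (∫ z in Set.Ioc (0:ℝ) 1, z ^ 2 ∂μ) := by ring
      _ ≤ 1 * (∫ z in Set.Ioc (0:ℝ) 1, z ^ 2 ∂μ) := mul_le_mul_of_nonneg_right h1 hM₁
      _ = _ := one_mul _
  · refine mul_nonpos_of_nonneg_of_nonpos hx ?_
    refine MeasureTheory.integral_nonpos_of_ae ((MeasureTheory.ae_restrict_iff' measurableSet_Ioc).2
      (Filter.Eventually.of_forall fun z hz => ?_))
    have hu0 : 0 ≤ z / (1 + x) := div_nonneg hz.1.le hax.le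
    have h1 := log_one_add_le hu0
    show Real.log (1 + z / (1 + x)) - (z / (1 + x)) * (if z ≤ 1 then 1 else 0) ≤ 0
    rw [if_pos hz.2, mul_one]
    linarith

private lemma Ibounds {μ : MeasureTheory.Measure ℝ}
    (hμlog : ∫⁻ z in Set.Ioi (1:ℝ), ENNReal.ofReal (Real.log (1 + z)) ∂μ < ⊤) {x : ℝ} (hx : 0 ≤ x) :
    0 ≤ (∫ z in Set.Ioi (1:ℝ), Real.log (1 + z / (1 + x)) ∂μ)
      ∧ (∫ z in Set.Ioi (1:ℝ), Real.log (1 + z / (1 + x)) ∂μ)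
          ≤ ∫ z in Set.Ioi (1:ℝ), Real.log (1 + z) ∂μ := by
  have hax : (0:ℝ) < 1 + x := by linarith
  constructor
  · refine MeasureTheory.setIntegral_nonneg measurableSet_Ioi (fun z hz => ?_)
    have hu0 : 0 ≤ z / (1 + x) := div_nonneg (by linarith [hz.out]) hax.le
    exact Real.log_nonneg (by linarith)
  · refine MeasureTheory.setIntegral_mono_on (Gint_tail hμlog hx) (int_log_tail hμlog)
      measurableSet_Ioi (fun z hz => ?_)
    have hz1 : (1:ℝ) < z := hz
    have hu0 : 0 ≤ z / (1 + x) := div_nonneg (by linarith) hax.le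
    have huz : z / (1 + x) ≤ z := div_le_self (by linarith) (by linarith)
    exact Real.log_le_log (by linarith) (by linarith)

private lemma Bbounds {ν : MeasureTheory.Measure ℝ}
    (hνloc : ∫⁻ z, ENNReal.ofReal (min 1 z) ∂ν < ⊤)
    (hνlog : ∫⁻ z in Set.Ioi (1:ℝ), ENNReal.ofReal (Real.log (1 + z)) ∂ν < ⊤) {x : ℝ} (hx : 0 ≤ x) :
    0 ≤ (∫ z in Set.Ioi (0:ℝ), Real.log (1 + z / (1 + x)) ∂ν)
      ∧ (∫ z in Set.Ioi (0:ℝ), Real.log (1 + z / (1 + x)) ∂ν)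
          ≤ ∫ z in Set.Ioi (0:ℝ), Real.log (1 + z) ∂ν := by
  have hax : (0:ℝ) < 1 + x := by linarith
  constructor
  · refine MeasureTheory.setIntegral_nonneg measurableSet_Ioi (fun z hz => ?_)
    have hu0 : 0 ≤ z / (1 + x) := div_nonneg (by linarith [hz.out]) hax.le
    exact Real.log_nonneg (by linarith)
  · refine MeasureTheory.setIntegral_mono_on (Gint_all hνloc hνlog hx) (int_log_all hνloc hνlog)
      measurableSet_Ioi (fun z hz => ?_)
    have hz0 : (0:ℝ) < z := hz
    have hu0 : 0 ≤ z / (1 + x) := div_nonneg (by linarith) hax.le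
    have huz : z / (1 + x) ≤ z := div_le_self (by linarith) (by linarith)
    exact Real.log_le_log (by linarith) (by linarith)

/-- The sandwich: `L x` is within `K` of `x * I x - g x / (1 + x)`. -/
private lemma Lsandwich (b c β : ℝ) (hc : 0 ≤ c) (hβ : 0 ≤ β)
    {μ ν : MeasureTheory.Measure ℝ}
    (hμloc : ∫⁻ z, ENNReal.ofReal (min 1 (z ^ 2)) ∂μ < ⊤)
    (hνloc : ∫⁻ z, ENNReal.ofReal (min 1 z) ∂ν < ⊤)
    (hμlog : ∫⁻ z in Set.Ioi (1:ℝ), ENNReal.ofReal (Real.log (1 + z)) ∂μ < ⊤)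
    (hνlog : ∫⁻ z in Set.Ioi (1:ℝ), ENNReal.ofReal (Real.log (1 + z)) ∂ν < ⊤)
    (g : ℝ → ℝ) {x : ℝ} (hx : 0 ≤ x) :
    |(-c / (1 + x) ^ 2
        + x * (∫ z in Set.Ioi (0:ℝ),
            (Real.log (1 + z / (1 + x)) - (z / (1 + x)) * (if z ≤ 1 then 1 else 0)) ∂μ)
        + (β - b * x - g x) / (1 + x)
        + (∫ z in Set.Ioi (0:ℝ), Real.log (1 + z / (1 + x)) ∂ν))
      - (x * (∫ z in Set.Ioi (1:ℝ), Real.log (1 + z / (1 + x)) ∂μ) - g x / (1 + x))|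
      ≤ c + β + |b| + (∫ z in Set.Ioc (0:ℝ) 1, z ^ 2 ∂μ)
          + (∫ z in Set.Ioi (0:ℝ), Real.log (1 + z) ∂ν) := by
  have hax : (0:ℝ) < 1 + x := by linarith
  have hJ := Jbounds hμloc hx
  have hB := Bbounds hνloc hνlog hx
  rw [Fdecomp hμloc hμlog hx, mul_add]
  -- scalar terms
  have ht1a : -c / (1 + x) ^ 2 ≤ 0 := div_nonpos_of_nonpos_of_nonneg (by linarith) (by positivity)
  have ht1b : -c ≤ -c / (1 + x) ^ 2 := by
    rw [neg_div, neg_le_neg_iff]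
    exact div_le_self hc (by nlinarith)
  have hsplit : (β - b * x - g x) / (1 + x) = (β - b * x) / (1 + x) - g x / (1 + x) := by ring
  have ht3a : (β - b * x) / (1 + x) ≤ β + |b| := by
    rw [div_le_iff₀ hax]
    nlinarith [neg_abs_le b, le_abs_self b, abs_nonneg b]
  have ht3b : -|b| ≤ (β - b * x) / (1 + x) := by
    rw [le_div_iff₀ hax]
    nlinarith [neg_abs_le b, le_abs_self b, abs_nonneg b]
  rw [hsplit, abs_le]
  constructor <;> linarith [hJ.1, hJ.2, hB.1, hB.2]


private lemma log3_ge_one' : (1:ℝ) ≤ Real.log 3 := by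
  rw [Real.le_log_iff_exp_le (by norm_num)]
  have := Real.exp_one_lt_d9
  linarith

set_option maxHeartbeats 1000000 in
private lemma abstract_iff (K M₃ : ℝ) (hK : 0 ≤ K) (hM₃ : 0 ≤ M₃)
    (L G I : ℝ → ℝ)
    (hsand : ∀ x : ℝ, 0 ≤ x → |L x - (x * I x - G x / (1+x))| ≤ K)
    (hG : ∀ x : ℝ, 0 ≤ x → 0 ≤ G x)
    (hI : ∀ x : ℝ, 0 ≤ x → 0 ≤ I x ∧ I x ≤ M₃) :
    (∃ C₀ > (0:ℝ), ∃ C₁ > (0:ℝ), ∀ x : ℝ, 0 ≤ x → L x ≤ C₀ - C₁ * Real.log (1+x)) ↔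
    (0:EReal) < Filter.liminf
      (fun x : ℝ => ((G x / (x * Real.log x) - (x / Real.log x) * I x : ℝ) : EReal))
      Filter.atTop := by
  constructor
  · rintro ⟨C₀, hC₀, C₁, hC₁, hLyap⟩
    have hmain : ∀ x : ℝ, 0 ≤ x →
        C₁ * Real.log (1+x) - (C₀ + K) ≤ G x / (1+x) - x * I x := by
      intro x hx
      have h1 := hLyap x hx
      have h2 := (abs_le.1 (hsand x hx)).1
      linarith
    obtain ⟨D, hDdef⟩ : ∃ D : ℝ, D = C₀ + K := ⟨_, rfl⟩
    rw [← hDdef] at hmain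
    have hDpos : 0 < D := by rw [hDdef]; linarith
    refine lt_of_lt_of_le
      (show (0:EReal) < ((C₁/2 : ℝ) : EReal) from EReal.coe_pos.2 (by linarith)) ?_
    refine Filter.le_liminf_of_le (by isBoundedDefault) ?_
    filter_upwards [Filter.eventually_ge_atTop (max 3 (Real.exp (2*D/C₁)))] with x hxge
    have hx3 : (3:ℝ) ≤ x := le_trans (le_max_left _ _) hxge
    have hxe : Real.exp (2*D/C₁) ≤ x := le_trans (le_max_right _ _) hxge
    have hxpos : (0:ℝ) < x := by linarith
    have hlog1 : 1 ≤ Real.log x := le_trans log3_ge_one' (Real.log_le_log (by norm_num) hx3)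
    have hlogD : 2*D/C₁ ≤ Real.log x := (Real.le_log_iff_exp_le hxpos).2 hxe
    have hC₁' : C₁ ≠ 0 := ne_of_gt hC₁
    have hD2 : D ≤ (C₁/2) * Real.log x := by
      have h := mul_le_mul_of_nonneg_left hlogD (by linarith : (0:ℝ) ≤ C₁/2)
      calc D = (C₁/2) * (2*D/C₁) := by field_simp
        _ ≤ (C₁/2) * Real.log x := h
    have h1 := hmain x hxpos.le
    have hgx : G x / (1+x) ≤ G x / x :=
      div_le_div_of_nonneg_left (hG x hxpos.le) hxpos (by linarith)
    have hlx : Real.log x ≤ Real.log (1+x) := Real.log_le_log hxpos (by linarith)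
    have hClx := mul_le_mul_of_nonneg_left hlx hC₁.le
    rw [EReal.coe_le_coe_iff]
    have hlpos : (0:ℝ) < Real.log x := by linarith
    have hx0 : x ≠ 0 := ne_of_gt hxpos
    have hl0 : Real.log x ≠ 0 := ne_of_gt hlpos
    have heq : G x / (x * Real.log x) - (x / Real.log x) * I x
        = (G x / x - x * I x) / Real.log x := by
      field_simp
    rw [heq, le_div_iff₀ hlpos]
    linarith
  · intro hpos
    obtain ⟨y, hy0, hylim⟩ := exists_between hpos
    have hytop : y ≠ ⊤ := (lt_of_lt_of_le hylim le_top).ne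
    have hybot : y ≠ ⊥ := ne_bot_of_gt hy0
    have hcoe : ((y.toReal : ℝ) : EReal) = y := EReal.coe_toReal hytop hybot
    obtain ⟨ε, hcoe, hε⟩ : ∃ ε : ℝ, ((ε : ℝ) : EReal) = y ∧ 0 < ε :=
      ⟨y.toReal, hcoe, EReal.coe_pos.1 (by rw [hcoe]; exact hy0)⟩
    have hev := Filter.eventually_lt_of_lt_liminf hylim (by isBoundedDefault)
    rw [Filter.eventually_atTop] at hev
    obtain ⟨X₀, hX₀⟩ := hev
    obtain ⟨X, hXX₀, hX3⟩ : ∃ X : ℝ, X₀ ≤ X ∧ (3:ℝ) ≤ X :=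
      ⟨max X₀ 3, le_max_left _ _, le_max_right _ _⟩
    obtain ⟨C₂, hC₂def⟩ : ∃ C₂ : ℝ, C₂ = (3/8)*ε*Real.log (1+X) + X*M₃ + M₃ := ⟨_, rfl⟩
    have hlogX : 0 ≤ Real.log (1+X) := Real.log_nonneg (by linarith)
    have hC₂M : M₃ ≤ C₂ := by
      rw [hC₂def]
      nlinarith [hε, hM₃, hX3]
    have hclaim : ∀ x : ℝ, 0 ≤ x →
        (3/8)*ε*Real.log (1+x) - C₂ ≤ G x/(1+x) - x * I x := by
      intro x hx
      have hax : (0:ℝ) < 1 + x := by linarith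
      have hIb := hI x hx
      rcases le_or_gt X x with hXx | hxX
      · have hx3 : (3:ℝ) ≤ x := le_trans hX3 hXx
        have hxpos : (0:ℝ) < x := by linarith
        have hlog1 : 1 ≤ Real.log x := le_trans log3_ge_one' (Real.log_le_log (by norm_num) hx3)
        have hlpos : (0:ℝ) < Real.log x := by linarith
        have hx0 : x ≠ 0 := ne_of_gt hxpos
        have hl0 : Real.log x ≠ 0 := ne_of_gt hlpos
        have hyx := hX₀ x (le_trans hXX₀ hXx)
        have hεx : ε < G x / (x * Real.log x) - (x / Real.log x) * I x := by
          rw [← EReal.coe_lt_coe_iff, hcoe]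
          exact hyx
        have heq : G x / (x * Real.log x) - (x / Real.log x) * I x
            = (G x / x - x * I x) / Real.log x := by
          field_simp
        rw [heq] at hεx
        have hkey : ε * Real.log x ≤ G x / x - x * I x := by
          calc ε * Real.log x
              ≤ ((G x / x - x * I x) / Real.log x) * Real.log x :=
                mul_le_mul_of_nonneg_right hεx.le hlpos.le
            _ = _ := div_mul_cancel₀ _ hl0
        have hq1 : x/(1+x) ≤ 1 := by rw [div_le_one hax]; linarith
        have hq34 : (3:ℝ)/4 ≤ x/(1+x) := by rw [le_div_iff₀ hax]; linarith
        have hq0 : (0:ℝ) ≤ x/(1+x) := by positivity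
        have hgq : (x/(1+x)) * (G x / x) = G x/(1+x) := by
          field_simp
        have hqx : (x/(1+x)) * x = x - x/(1+x) := by field_simp; ring
        have hqI : (x/(1+x)) * I x ≤ I x := mul_le_of_le_one_left hIb.1 hq1
        have hexp : (x/(1+x)) * (G x / x - x * I x)
            = G x/(1+x) - (x - x/(1+x)) * I x := by
          rw [mul_sub, hgq, ← mul_assoc, hqx]
        have hstep : (x/(1+x)) * (G x / x - x * I x) - I x ≤ G x/(1+x) - x * I x := by
          rw [hexp]
          nlinarith [hqI]
        have hmul : (3/4)*ε*Real.log x ≤ (x/(1+x)) * (ε * Real.log x) := by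
          have h0 : 0 ≤ ε * Real.log x := mul_nonneg hε.le hlpos.le
          nlinarith [hq34, h0]
        have hmul2 : (x/(1+x)) * (ε * Real.log x) ≤ (x/(1+x)) * (G x / x - x * I x) :=
          mul_le_mul_of_nonneg_left hkey hq0
        have hlog2x : Real.log (1+x) ≤ 2 * Real.log x := by
          have h2x := Real.log_le_log (by linarith : (0:ℝ) < 1 + x) (by linarith : 1+x ≤ 2*x)
          rw [Real.log_mul two_ne_zero hx0] at h2x
          have hl2 : Real.log 2 ≤ Real.log x := Real.log_le_log (by norm_num) (by linarith)
          linarith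
        have hfin : (3/8)*ε*Real.log (1+x) ≤ (3/4)*ε*Real.log x := by nlinarith [hε, hlog2x]
        linarith [hstep, hmul, hmul2, hfin, hIb.2, hC₂M]
      · have hXpos : (0:ℝ) < X := by linarith
        have hxI : x * I x ≤ X * M₃ := mul_le_mul hxX.le hIb.2 hIb.1 (by linarith)
        have hgp : 0 ≤ G x / (1+x) := div_nonneg (hG x hx) hax.le
        have hlogm : Real.log (1+x) ≤ Real.log (1+X) :=
          Real.log_le_log (by linarith) (by linarith)
        have h38 : (3/8)*ε*Real.log (1+x) ≤ (3/8)*ε*Real.log (1+X) := by nlinarith [hε]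
        rw [hC₂def]
        linarith [hM₃]
    have hC₂0 : 0 ≤ C₂ := le_trans hM₃ hC₂M
    refine ⟨K + C₂ + 1, by linarith, (3/8)*ε, by linarith, ?_⟩
    intro x hx
    have h2 := (abs_le.1 (hsand x hx)).2
    have h3 := hclaim x hx
    linarith

/- Proposition 1.3 of Li–Li–Wang–Zhou, "Exponential ergodicity of branching
processes with immigration and competition".

Context: `b ∈ ℝ`, `c ≥ 0`, `β ≥ 0`; `μ`, `ν` are Borel measures on `(0,∞)`
with `∫(1∧z²)μ(dz) < ∞` and `∫(1∧z)ν(dz) < ∞`; `g` is a nondecreasing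
continuous competition mechanism with `g(0) = 0`.

Statement: assuming `∫₁^∞ log(1+z) μ(dz) + ∫₁^∞ log(1+z) ν(dz) < ∞`, for every
`x ≥ 0` the integrals in
`LV_log(x) = −c/(1+x)² + x∫₀^∞[log(1+z/(1+x)) − (z/(1+x))1_{z≤1}]μ(dz)
 + (β − bx − g(x))/(1+x) + ∫₀^∞ log(1+z/(1+x))ν(dz)` converge, and
`V_log(x) = log(1+x)` is a Lyapunov function (`∃ C₀ > 0, C₁ > 0` with
`LV_log(x) ≤ C₀ − C₁ log(1+x)` for all `x ≥ 0`) if and only if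
`liminf_{x→∞} { g(x)/(x log x) − (x/log x)∫₁^∞ log(1+z/(1+x)) μ(dz) } > 0`. -/
theorem lyapunov_Vlog_iff
    (b c β : ℝ) (hc : 0 ≤ c) (hβ : 0 ≤ β)
    (μ ν : MeasureTheory.Measure ℝ)
    (hμsupp : μ (Set.Iic 0) = 0) (hνsupp : ν (Set.Iic 0) = 0)
    (hμloc : ∫⁻ z, ENNReal.ofReal (min 1 (z ^ 2)) ∂μ < ⊤)
    (hνloc : ∫⁻ z, ENNReal.ofReal (min 1 z) ∂ν < ⊤)
    (g : ℝ → ℝ) (hg0 : g 0 = 0) (hgmono : MonotoneOn g (Set.Ici 0))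
    (hgcont : ContinuousOn g (Set.Ici 0)) (hgnonneg : ∀ x ∈ Set.Ici (0 : ℝ), 0 ≤ g x)
    (hμlog : ∫⁻ z in Set.Ioi (1 : ℝ), ENNReal.ofReal (Real.log (1 + z)) ∂μ < ⊤)
    (hνlog : ∫⁻ z in Set.Ioi (1 : ℝ), ENNReal.ofReal (Real.log (1 + z)) ∂ν < ⊤) :
    (∀ x : ℝ, 0 ≤ x →
        MeasureTheory.IntegrableOn
          (fun z => Real.log (1 + z / (1 + x)) - (z / (1 + x)) * (if z ≤ 1 then 1 else 0))
          (Set.Ioi 0) μ ∧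
        MeasureTheory.IntegrableOn (fun z => Real.log (1 + z / (1 + x))) (Set.Ioi 0) ν) ∧
    ((∃ C₀ > (0 : ℝ), ∃ C₁ > (0 : ℝ), ∀ x : ℝ, 0 ≤ x →
        -c / (1 + x) ^ 2
            + x * (∫ z in Set.Ioi (0 : ℝ),
                (Real.log (1 + z / (1 + x)) - (z / (1 + x)) * (if z ≤ 1 then 1 else 0)) ∂μ)
            + (β - b * x - g x) / (1 + x)
            + (∫ z in Set.Ioi (0 : ℝ), Real.log (1 + z / (1 + x)) ∂ν)
          ≤ C₀ - C₁ * Real.log (1 + x))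
      ↔ (0 : EReal) < Filter.liminf
          (fun x : ℝ => ((g x / (x * Real.log x)
            - (x / Real.log x) * ∫ z in Set.Ioi (1 : ℝ), Real.log (1 + z / (1 + x)) ∂μ : ℝ) : EReal))
          Filter.atTop) := by
  have hM₂ : 0 ≤ ∫ z in Set.Ioi (0:ℝ), Real.log (1 + z) ∂ν :=
    MeasureTheory.setIntegral_nonneg measurableSet_Ioi
      (fun z hz => Real.log_nonneg (by linarith [hz.out]))
  have hM₁ : 0 ≤ ∫ z in Set.Ioc (0:ℝ) 1, z ^ 2 ∂μ :=
    MeasureTheory.setIntegral_nonneg measurableSet_Ioc (fun z _ => sq_nonneg z)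
  have hM₃ : 0 ≤ ∫ z in Set.Ioi (1:ℝ), Real.log (1 + z) ∂μ :=
    MeasureTheory.setIntegral_nonneg measurableSet_Ioi
      (fun z hz => Real.log_nonneg (by linarith [hz.out]))
  have hK : 0 ≤ c + β + |b| + (∫ z in Set.Ioc (0:ℝ) 1, z ^ 2 ∂μ)
      + (∫ z in Set.Ioi (0:ℝ), Real.log (1 + z) ∂ν) := by
    have := abs_nonneg b; linarith
  refine ⟨fun x hx => ⟨Fint_all hμloc hμlog hx, Gint_all hνloc hνlog hx⟩, ?_⟩
  exact abstract_iff
    (c + β + |b| + (∫ z in Set.Ioc (0:ℝ) 1, z ^ 2 ∂μ)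
      + (∫ z in Set.Ioi (0:ℝ), Real.log (1 + z) ∂ν))
    (∫ z in Set.Ioi (1:ℝ), Real.log (1 + z) ∂μ) hK hM₃
    (fun x => -c / (1 + x) ^ 2
        + x * (∫ z in Set.Ioi (0 : ℝ),
            (Real.log (1 + z / (1 + x)) - (z / (1 + x)) * (if z ≤ 1 then 1 else 0)) ∂μ)
        + (β - b * x - g x) / (1 + x)
        + (∫ z in Set.Ioi (0 : ℝ), Real.log (1 + z / (1 + x)) ∂ν))
    g
    (fun x => ∫ z in Set.Ioi (1 : ℝ), Real.log (1 + z / (1 + x)) ∂μ)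
    (fun x hx => Lsandwich b c β hc hβ hμloc hνloc hμlog hνlog g hx)
    (fun x hx => hgnonneg x (Set.mem_Ici.2 hx))
    (fun x hx => Ibounds hμlog hx)
end

section
/- For any γ, η ∈ P_V([0,∞)), the V-weighted total variation distance coincides with the Wasserstein distance determined by the cost d_V: W_V(γ,η) = ∫₀^∞(1+V(x))|γ−η|(dx) = inf_{π ∈ C(γ,η)} ∫ d_V(x,y) π(dx,dy), where C(γ,η) is the collection of all Borel probability measures on [0,∞)² whose first marginal is γ and second marginal is η; moreover the infimum is attained by some π ∈ C(γ,η). -/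
open MeasureTheory

/- Lemma 5.3 of Li–Li–Wang–Zhou: for probability measures `γ, η` on `[0,∞)`
with finite `V`-moment, the `V`-weighted total variation distance
`W_V(γ,η) = ∫ (1+V) d|γ−η|` coincides with the Wasserstein distance determined
by the cost `d_V(x,y) = (2 + V(x) + V(y)) 1_{x≠y}`:
`W_V(γ,η) = inf_{π ∈ C(γ,η)} ∫ d_V dπ`, and the infimum is attained by some
coupling `π ∈ C(γ,η)`.  (Costs are computed as lower integrals in `[0,∞]`.) -/
theorem weighted_TV_eq_wasserstein
    (V : ℝ → ℝ) (hV : Measurable V) (hVnonneg : ∀ x, 0 ≤ V x)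
    (γ η : Measure ℝ) [IsProbabilityMeasure γ] [IsProbabilityMeasure η]
    (hγsupp : γ (Set.Iio 0) = 0) (hηsupp : η (Set.Iio 0) = 0)
    (hγV : Integrable V γ) (hηV : Integrable V η) :
    ∃ π : Measure (ℝ × ℝ), IsProbabilityMeasure π ∧
      π.map Prod.fst = γ ∧ π.map Prod.snd = η ∧
      (∫⁻ p : ℝ × ℝ, ENNReal.ofReal (if p.1 = p.2 then 0 else 2 + V p.1 + V p.2) ∂π
        = ∫⁻ x, ENNReal.ofReal (1 + V x)
            ∂((γ.toSignedMeasure - η.toSignedMeasure).totalVariation)) ∧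
      ∀ π' : Measure (ℝ × ℝ), IsProbabilityMeasure π' →
        π'.map Prod.fst = γ → π'.map Prod.snd = η →
        (∫⁻ x, ENNReal.ofReal (1 + V x)
            ∂((γ.toSignedMeasure - η.toSignedMeasure).totalVariation))
          ≤ ∫⁻ p : ℝ × ℝ, ENNReal.ofReal (if p.1 = p.2 then 0 else 2 + V p.1 + V p.2) ∂π' := by
  classical
  set s : SignedMeasure ℝ := γ.toSignedMeasure - η.toSignedMeasure with hs
  set p : Measure ℝ := s.toJordanDecomposition.posPart with hpdef
  set n : Measure ℝ := s.toJordanDecomposition.negPart with hndef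
  haveI hpfin : IsFiniteMeasure p := s.toJordanDecomposition.posPart_finite
  haveI hnfin : IsFiniteMeasure n := s.toJordanDecomposition.negPart_finite
  have htv : (γ.toSignedMeasure - η.toSignedMeasure).totalVariation = p + n := rfl
  -- the key balance identity
  have key : ∀ T : Set ℝ, MeasurableSet T → γ T + n T = η T + p T := by
    intro T hT
    have h1 : s T = (γ T).toReal - (η T).toReal := by
      rw [hs, VectorMeasure.sub_apply, Measure.toSignedMeasure_apply_measurable hT,
        Measure.toSignedMeasure_apply_measurable hT]
      rfl
    have h2 : s T = (p T).toReal - (n T).toReal := by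
      conv_lhs => rw [← s.toSignedMeasure_toJordanDecomposition]
      rw [JordanDecomposition.toSignedMeasure, VectorMeasure.sub_apply,
        Measure.toSignedMeasure_apply_measurable hT,
        Measure.toSignedMeasure_apply_measurable hT]
      rfl
    have h3 : (γ T).toReal + (n T).toReal = (η T).toReal + (p T).toReal := by
      have := h1.symm.trans h2
      linarith
    have h4 : (γ T + n T).toReal = (η T + p T).toReal := by
      rw [ENNReal.toReal_add (measure_ne_top _ _) (measure_ne_top _ _),
        ENNReal.toReal_add (measure_ne_top _ _) (measure_ne_top _ _)]
      exact h3
    exact (ENNReal.toReal_eq_toReal_iff' (by finiteness) (by finiteness)).mp h4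
  -- the supporting set of p
  obtain ⟨t, ht, hpt, hnt⟩ := s.toJordanDecomposition.mutuallySingular
  set A : Set ℝ := tᶜ with hAdef
  have hA : MeasurableSet A := ht.compl
  have hpA : p Aᶜ = 0 := by simpa [hAdef] using hpt
  have hnA : n A = 0 := hnt
  have hprestrict : ∀ T : Set ℝ, p T = p (T ∩ A) := by
    intro T
    have h1 : p (T ∩ A) + p (T \ A) = p T := measure_inter_add_diff T hA
    have h2 : p (T \ A) = 0 :=
      measure_mono_null (fun x hx => hx.2) hpA
    rw [← h1, h2, add_zero]
  have hnrestrict : ∀ T : Set ℝ, n T = n (T ∩ Aᶜ) := by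
    intro T
    have h1 : n (T ∩ Aᶜ) + n (T \ Aᶜ) = n T := measure_inter_add_diff T hA.compl
    have h2 : n (T \ Aᶜ) = 0 :=
      measure_mono_null (fun x hx => not_not.mp hx.2) hnA
    rw [← h1, h2, add_zero]
  -- identities on subsets of A / Aᶜ
  have keyA : ∀ T : Set ℝ, MeasurableSet T → T ⊆ A → γ T = η T + p T := by
    intro T hT hTA
    have hnT : n T = 0 := measure_mono_null hTA hnA
    have := key T hT
    rwa [hnT, add_zero] at this
  have keyAc : ∀ T : Set ℝ, MeasurableSet T → T ⊆ Aᶜ → η T = γ T + n T := by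
    intro T hT hTA
    have hpT : p T = 0 := measure_mono_null hTA hpA
    have := key T hT
    rw [hpT, add_zero] at this
    exact this.symm
  -- measurability of the cost function
  have hD : MeasurableSet {q : ℝ × ℝ | q.1 = q.2} :=
    measurableSet_eq_fun measurable_fst measurable_snd
  have hf : Measurable (fun q : ℝ × ℝ =>
      ENNReal.ofReal (if q.1 = q.2 then 0 else 2 + V q.1 + V q.2)) := by
    apply ENNReal.measurable_ofReal.comp
    exact Measurable.ite hD measurable_const
      (((measurable_const.add (hV.comp measurable_fst)).add (hV.comp measurable_snd)))
  have hh : Measurable (fun x : ℝ => ENNReal.ofReal (1 + V x)) :=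
    ENNReal.measurable_ofReal.comp (measurable_const.add hV)
  have hd : Measurable (fun x : ℝ => (x, x)) := measurable_id.prodMk measurable_id
  have hVof : Measurable (fun x : ℝ => ENNReal.ofReal (V x)) :=
    ENNReal.measurable_ofReal.comp hV
  -- mass balance
  have hmass : n Set.univ = p Set.univ := by
    have h := key Set.univ MeasurableSet.univ
    rw [show γ Set.univ = 1 from measure_univ, show η Set.univ = 1 from measure_univ] at h
    exact (ENNReal.add_right_inj ENNReal.one_ne_top).mp h
  by_cases hm : p Set.univ = 0
  · -- degenerate case: γ = η
    have hp0 : p = 0 := Measure.measure_univ_eq_zero.mp hm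
    have hn0 : n = 0 := Measure.measure_univ_eq_zero.mp (by rw [hmass]; exact hm)
    have hγη : γ = η := by
      ext T hT
      have := key T hT
      rw [hp0, hn0] at this
      simpa using this
    refine ⟨γ.map (fun x => (x, x)), ?_, ?_, ?_, ?_, ?_⟩
    · exact Measure.isProbabilityMeasure_map hd.aemeasurable
    · rw [Measure.map_map measurable_fst hd]
      exact Measure.map_id
    · rw [Measure.map_map measurable_snd hd]
      exact hγη ▸ Measure.map_id
    · rw [lintegral_map hf hd, htv, hp0, hn0]
      simp
    · intro π' _ _ _
      rw [htv, hp0, hn0]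
      simp
  · -- nondegenerate case
    have hm' : p Set.univ ≠ ⊤ := measure_ne_top _ _
    -- the common part
    set μ₀ : Measure ℝ := η.restrict A + γ.restrict Aᶜ with hμ₀
    have hγdec : γ = μ₀ + p := by
      ext T hT
      have h2 : γ (T ∩ A) = η (T ∩ A) + p (T ∩ A) :=
        keyA (T ∩ A) (hT.inter hA) Set.inter_subset_right
      have h3 : γ (T ∩ A) + γ (T ∩ Aᶜ) = γ T := by
        have := measure_inter_add_diff T hA (μ := γ)
        rwa [Set.diff_eq] at this
      rw [Measure.add_apply, Measure.add_apply, Measure.restrict_apply hT,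
        Measure.restrict_apply hT, hprestrict T, ← h3, h2]
      ring
    have hηdec : η = μ₀ + n := by
      ext T hT
      have h2 : η (T ∩ Aᶜ) = γ (T ∩ Aᶜ) + n (T ∩ Aᶜ) :=
        keyAc (T ∩ Aᶜ) (hT.inter hA.compl) Set.inter_subset_right
      have h3 : η (T ∩ A) + η (T ∩ Aᶜ) = η T := by
        have := measure_inter_add_diff T hA (μ := η)
        rwa [Set.diff_eq] at this
      rw [Measure.add_apply, Measure.add_apply, Measure.restrict_apply hT,
        Measure.restrict_apply hT, hnrestrict T, ← h3, h2]
      ring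
    -- the optimal coupling
    set π : Measure (ℝ × ℝ) :=
      μ₀.map (fun x => (x, x)) + (p Set.univ)⁻¹ • (p.prod n) with hπdef
    have hmapfst : π.map Prod.fst = γ := by
      rw [hπdef, Measure.map_add _ _ measurable_fst, Measure.map_smul,
        Measure.map_map measurable_fst hd, Measure.map_fst_prod, hmass,
        smul_smul, ENNReal.inv_mul_cancel hm hm', one_smul,
        show (Prod.fst ∘ fun x : ℝ => (x, x)) = id from rfl, Measure.map_id]
      exact hγdec.symm
    have hmapsnd : π.map Prod.snd = η := by
      rw [hπdef, Measure.map_add _ _ measurable_snd, Measure.map_smul,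
        Measure.map_map measurable_snd hd, Measure.map_snd_prod,
        smul_smul, ENNReal.inv_mul_cancel hm hm', one_smul,
        show (Prod.snd ∘ fun x : ℝ => (x, x)) = id from rfl, Measure.map_id]
      exact hηdec.symm
    have hπprob : IsProbabilityMeasure π := by
      constructor
      rw [← Set.preimage_univ (f := Prod.fst),
        ← Measure.map_apply measurable_fst MeasurableSet.univ, hmapfst]
      exact measure_univ
    -- diagonal is null for p.prod n
    have hDnull : (p.prod n) {q : ℝ × ℝ | q.1 = q.2} = 0 := by
      have hsub : {q : ℝ × ℝ | q.1 = q.2} ⊆ (Aᶜ ×ˢ Set.univ) ∪ (Set.univ ×ˢ A) := by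
        intro q hq
        by_cases hqA : q.1 ∈ A
        · right
          exact ⟨trivial, hq ▸ hqA⟩
        · left
          exact ⟨hqA, trivial⟩
      refine le_antisymm ?_ zero_le
      calc (p.prod n) {q : ℝ × ℝ | q.1 = q.2}
          ≤ (p.prod n) ((Aᶜ ×ˢ Set.univ) ∪ (Set.univ ×ˢ A)) := measure_mono hsub
        _ ≤ (p.prod n) (Aᶜ ×ˢ Set.univ) + (p.prod n) (Set.univ ×ˢ A) := measure_union_le _ _
        _ = 0 := by rw [Measure.prod_prod, Measure.prod_prod, hpA, hnA]; simp
    -- cost of the coupling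
    have hcost : ∫⁻ q : ℝ × ℝ,
        ENNReal.ofReal (if q.1 = q.2 then 0 else 2 + V q.1 + V q.2) ∂π
        = ∫⁻ x, ENNReal.ofReal (1 + V x)
            ∂((γ.toSignedMeasure - η.toSignedMeasure).totalVariation) := by
      rw [hπdef, lintegral_add_measure, lintegral_smul_measure,
        lintegral_map hf hd]
      have hdiag0 : ∫⁻ x : ℝ,
          ENNReal.ofReal (if x = x then 0 else 2 + V x + V x) ∂μ₀ = 0 := by
        simp
      rw [hdiag0, zero_add]
      have hprodeq : ∫⁻ q : ℝ × ℝ,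
          ENNReal.ofReal (if q.1 = q.2 then 0 else 2 + V q.1 + V q.2) ∂(p.prod n)
          = ∫⁻ q : ℝ × ℝ,
            (2 + ENNReal.ofReal (V q.1) + ENNReal.ofReal (V q.2)) ∂(p.prod n) := by
        apply lintegral_congr_ae
        have hae : ∀ᵐ q : ℝ × ℝ ∂(p.prod n), q ∉ {q : ℝ × ℝ | q.1 = q.2} :=
          (measure_eq_zero_iff_ae_notMem (μ := p.prod n)).mp hDnull
        filter_upwards [hae] with q hq
        rw [if_neg hq, ENNReal.ofReal_add (by linarith [hVnonneg q.1]) (hVnonneg q.2),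
          ENNReal.ofReal_add (by norm_num) (hVnonneg q.1)]
        norm_num
      rw [hprodeq]
      have hsplit : ∫⁻ q : ℝ × ℝ,
          (2 + ENNReal.ofReal (V q.1) + ENNReal.ofReal (V q.2)) ∂(p.prod n)
          = 2 * (p Set.univ * n Set.univ)
            + n Set.univ * (∫⁻ x, ENNReal.ofReal (V x) ∂p)
            + p Set.univ * (∫⁻ x, ENNReal.ofReal (V x) ∂n) := by
        have huniv : (p.prod n) Set.univ = p Set.univ * n Set.univ := by
          rw [← Set.univ_prod_univ, Measure.prod_prod]
        rw [lintegral_add_right _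
            (show Measurable (fun q : ℝ × ℝ => ENNReal.ofReal (V q.2)) from
              hVof.comp measurable_snd),
          lintegral_add_right _
            (show Measurable (fun q : ℝ × ℝ => ENNReal.ofReal (V q.1)) from
              hVof.comp measurable_fst),
          lintegral_const, huniv,
          ← lintegral_map hVof measurable_fst, ← lintegral_map hVof measurable_snd,
          Measure.map_fst_prod, Measure.map_snd_prod,
          lintegral_smul_measure, lintegral_smul_measure]
        simp only [smul_eq_mul]
      rw [hsplit, htv, lintegral_add_measure]
      have hone : ∀ (ν : Measure ℝ), ∫⁻ x, ENNReal.ofReal (1 + V x) ∂ν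
          = ν Set.univ + ∫⁻ x, ENNReal.ofReal (V x) ∂ν := by
        intro ν
        have : (fun x : ℝ => ENNReal.ofReal (1 + V x))
            = fun x : ℝ => 1 + ENNReal.ofReal (V x) := by
          funext x
          rw [ENNReal.ofReal_add zero_le_one (hVnonneg x), ENNReal.ofReal_one]
        rw [this, lintegral_add_left measurable_const, lintegral_one]
      rw [hone p, hone n, hmass]
      set m := p Set.univ
      set Ip := ∫⁻ x, ENNReal.ofReal (V x) ∂p
      set In := ∫⁻ x, ENNReal.ofReal (V x) ∂n
      have harith : 2 * (m * m) + m * Ip + m * In = m * ((m + Ip) + (m + In)) := by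
        ring
      rw [harith, smul_eq_mul, ← mul_assoc, ENNReal.inv_mul_cancel hm hm', one_mul]
    refine ⟨π, hπprob, hmapfst, hmapsnd, hcost, ?_⟩
    -- lower bound for arbitrary couplings
    intro π' hπ' hfst hsnd
    set ρ : Measure (ℝ × ℝ) := π'.restrict {q : ℝ × ℝ | q.1 = q.2}ᶜ with hρdef
    have hple : p ≤ ρ.map Prod.fst := by
      rw [Measure.le_iff]
      intro T hT
      rw [hprestrict T]
      have hmono : (ρ.map Prod.fst) (T ∩ A) ≤ (ρ.map Prod.fst) T := by
        rw [Measure.map_apply measurable_fst hT,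
          Measure.map_apply measurable_fst (hT.inter hA)]
        exact measure_mono (Set.preimage_mono Set.inter_subset_left)
      refine le_trans ?_ hmono
      set T' := T ∩ A with hT'def
      have hT' : MeasurableSet T' := hT.inter hA
      have hkey' : γ T' = η T' + p T' := keyA T' hT' Set.inter_subset_right
      have hρT' : (ρ.map Prod.fst) T'
          = π' (Prod.fst ⁻¹' T' ∩ {q : ℝ × ℝ | q.1 = q.2}ᶜ) := by
        rw [Measure.map_apply measurable_fst hT', hρdef,
          Measure.restrict_apply (measurable_fst hT')]
      have hsplit : γ T' = π' (Prod.fst ⁻¹' T' ∩ {q : ℝ × ℝ | q.1 = q.2}ᶜ)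
          + π' (Prod.fst ⁻¹' T' ∩ {q : ℝ × ℝ | q.1 = q.2}) := by
        rw [← hfst, Measure.map_apply measurable_fst hT']
        rw [← measure_inter_add_diff (Prod.fst ⁻¹' T') hD.compl]
        congr 1
        rw [Set.diff_compl]
      have hdiagbound : π' (Prod.fst ⁻¹' T' ∩ {q : ℝ × ℝ | q.1 = q.2}) ≤ η T' := by
        rw [← hsnd, Measure.map_apply measurable_snd hT']
        apply measure_mono
        intro q hq
        have h1 : q.1 = q.2 := hq.2
        show q.2 ∈ T'
        rw [← h1]
        exact hq.1
      have : η T' + p T' ≤ (ρ.map Prod.fst) T' + η T' := by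
        rw [← hkey', hρT']
        calc γ T' = π' (Prod.fst ⁻¹' T' ∩ {q : ℝ × ℝ | q.1 = q.2}ᶜ)
              + π' (Prod.fst ⁻¹' T' ∩ {q : ℝ × ℝ | q.1 = q.2}) := hsplit
          _ ≤ π' (Prod.fst ⁻¹' T' ∩ {q : ℝ × ℝ | q.1 = q.2}ᶜ) + η T' :=
              add_le_add le_rfl hdiagbound
      rw [add_comm ((ρ.map Prod.fst) T') (η T')] at this
      exact (ENNReal.add_le_add_iff_left (measure_ne_top η T')).mp this
    have hnle : n ≤ ρ.map Prod.snd := by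
      rw [Measure.le_iff]
      intro T hT
      rw [hnrestrict T]
      have hmono : (ρ.map Prod.snd) (T ∩ Aᶜ) ≤ (ρ.map Prod.snd) T := by
        rw [Measure.map_apply measurable_snd hT,
          Measure.map_apply measurable_snd (hT.inter hA.compl)]
        exact measure_mono (Set.preimage_mono Set.inter_subset_left)
      refine le_trans ?_ hmono
      set T' := T ∩ Aᶜ with hT'def
      have hT' : MeasurableSet T' := hT.inter hA.compl
      have hkey' : η T' = γ T' + n T' := keyAc T' hT' Set.inter_subset_right
      have hρT' : (ρ.map Prod.snd) T'
          = π' (Prod.snd ⁻¹' T' ∩ {q : ℝ × ℝ | q.1 = q.2}ᶜ) := by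
        rw [Measure.map_apply measurable_snd hT', hρdef,
          Measure.restrict_apply (measurable_snd hT')]
      have hsplit : η T' = π' (Prod.snd ⁻¹' T' ∩ {q : ℝ × ℝ | q.1 = q.2}ᶜ)
          + π' (Prod.snd ⁻¹' T' ∩ {q : ℝ × ℝ | q.1 = q.2}) := by
        rw [← hsnd, Measure.map_apply measurable_snd hT']
        rw [← measure_inter_add_diff (Prod.snd ⁻¹' T') hD.compl]
        congr 1
        rw [Set.diff_compl]
      have hdiagbound : π' (Prod.snd ⁻¹' T' ∩ {q : ℝ × ℝ | q.1 = q.2}) ≤ γ T' := by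
        rw [← hfst, Measure.map_apply measurable_fst hT']
        apply measure_mono
        intro q hq
        have h1 : q.1 = q.2 := hq.2
        show q.1 ∈ T'
        rw [h1]
        exact hq.1
      have : γ T' + n T' ≤ (ρ.map Prod.snd) T' + γ T' := by
        rw [← hkey', hρT']
        calc η T' = π' (Prod.snd ⁻¹' T' ∩ {q : ℝ × ℝ | q.1 = q.2}ᶜ)
              + π' (Prod.snd ⁻¹' T' ∩ {q : ℝ × ℝ | q.1 = q.2}) := hsplit
          _ ≤ π' (Prod.snd ⁻¹' T' ∩ {q : ℝ × ℝ | q.1 = q.2}ᶜ) + γ T' :=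
              add_le_add le_rfl hdiagbound
      rw [add_comm ((ρ.map Prod.snd) T') (γ T')] at this
      exact (ENNReal.add_le_add_iff_left (measure_ne_top γ T')).mp this
    calc ∫⁻ x, ENNReal.ofReal (1 + V x)
          ∂((γ.toSignedMeasure - η.toSignedMeasure).totalVariation)
        = (∫⁻ x, ENNReal.ofReal (1 + V x) ∂p)
          + (∫⁻ x, ENNReal.ofReal (1 + V x) ∂n) := by
          rw [htv, lintegral_add_measure]
      _ ≤ (∫⁻ x, ENNReal.ofReal (1 + V x) ∂(ρ.map Prod.fst))
          + (∫⁻ x, ENNReal.ofReal (1 + V x) ∂(ρ.map Prod.snd)) :=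
          add_le_add (lintegral_mono' hple le_rfl) (lintegral_mono' hnle le_rfl)
      _ = ∫⁻ q : ℝ × ℝ,
            (ENNReal.ofReal (1 + V q.1) + ENNReal.ofReal (1 + V q.2)) ∂ρ := by
          rw [lintegral_map hh measurable_fst, lintegral_map hh measurable_snd]
          exact (lintegral_add_left
            (show Measurable (fun q : ℝ × ℝ => ENNReal.ofReal (1 + V q.1)) from
              hh.comp measurable_fst) _).symm
      _ = ∫⁻ q : ℝ × ℝ,
            ENNReal.ofReal (if q.1 = q.2 then 0 else 2 + V q.1 + V q.2) ∂ρ := by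
          rw [hρdef]
          apply setLIntegral_congr_fun hD.compl
          intro q hq
          have hq' : ¬ (q.1 = q.2) := hq
          beta_reduce
          rw [if_neg hq',
            ← ENNReal.ofReal_add (by linarith [hVnonneg q.1]) (by linarith [hVnonneg q.2])]
          congr 1
          ring
      _ ≤ ∫⁻ q : ℝ × ℝ,
            ENNReal.ofReal (if q.1 = q.2 then 0 else 2 + V q.1 + V q.2) ∂π' :=
          lintegral_mono' Measure.restrict_le_self le_rfl
end

section
/- Let r > 0 and 0 ≤ u < v, and let m be a Borel measure on ℝ vanishing on (−∞,0] such that m(A) ≥ r·Leb(A ∩ (u,v)) for every Borel set A. Then for every x with |x| ≤ (v−u)/2 one has (m ∧ T_x m)(ℝ) ≥ r(v−u)/2. In particular, the fluctuation condition '(μ ∧ T_xμ)((0,∞)) + (ν ∧ T_xν)((0,∞)) ≥ κ₀ for all |x| ≤ c₀' is satisfied (with c₀ = (v−u)/2 and κ₀ = r(v−u)/2) whenever μ(dz) or ν(dz) is bounded below by the measure r·1_{(u,v)}(z)dz. -/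
open MeasureTheory

/- Remark after Condition 1.2 of Li–Li–Wang–Zhou: if a Borel measure `m` on `ℝ`
vanishing on `(-∞,0]` is bounded below by `r·1_{(u,v)}(z)dz` (with `r > 0` and
`0 ≤ u < v`), then for every `|x| ≤ (v−u)/2` one has
`(m ∧ T_x m)(ℝ) ≥ r(v−u)/2`; in particular the fluctuation condition
`(μ ∧ T_xμ)(0,∞) + (ν ∧ T_xν)(0,∞) ≥ κ₀` for all `|x| ≤ c₀` holds with
`c₀ = (v−u)/2` and `κ₀ = r(v−u)/2` whenever `μ` or `ν` is bounded below by
`r·1_{(u,v)}(z)dz`. -/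
theorem fluctuation_condition_from_lower_bound
    (r u v : ℝ) (hr : 0 < r) (hu : 0 ≤ u) (huv : u < v)
    (m : Measure ℝ) (hmsupp : m (Set.Iic 0) = 0)
    (hmlow : ∀ A : Set ℝ, MeasurableSet A →
      ENNReal.ofReal r * volume (A ∩ Set.Ioo u v) ≤ m A) :
    (∀ x : ℝ, |x| ≤ (v - u) / 2 →
      ENNReal.ofReal (r * (v - u) / 2)
        ≤ (m ⊓ Measure.map (fun z => z + x) m) Set.univ) ∧
    (∀ μ ν : Measure ℝ,
      μ (Set.Iic 0) = 0 → ν (Set.Iic 0) = 0 →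
      ((∀ A : Set ℝ, MeasurableSet A →
          ENNReal.ofReal r * volume (A ∩ Set.Ioo u v) ≤ μ A) ∨
       (∀ A : Set ℝ, MeasurableSet A →
          ENNReal.ofReal r * volume (A ∩ Set.Ioo u v) ≤ ν A)) →
      ∀ x : ℝ, |x| ≤ (v - u) / 2 →
        ENNReal.ofReal (r * (v - u) / 2)
          ≤ (μ ⊓ Measure.map (fun z => z + x) μ) (Set.Ioi 0)
            + (ν ⊓ Measure.map (fun z => z + x) ν) (Set.Ioi 0)) := by
  have key : ∀ (μ : Measure ℝ), (∀ A : Set ℝ, MeasurableSet A →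
      ENNReal.ofReal r * volume (A ∩ Set.Ioo u v) ≤ μ A) →
      ∀ x : ℝ, |x| ≤ (v - u) / 2 →
      ENNReal.ofReal (r * (v - u) / 2)
        ≤ (μ ⊓ Measure.map (fun z => z + x) μ) Set.univ := by
    intro μ hlow x hx
    set c := ENNReal.ofReal r with hc
    have hmeas : Measurable (fun z : ℝ => z + x) := measurable_add_const x
    have h1 : c • volume.restrict (Set.Ioo u v) ≤ μ := by
      rw [Measure.le_iff]
      intro s hs
      simpa [Measure.restrict_apply hs] using hlow s hs
    have hpre : (fun z : ℝ => z + x) ⁻¹' Set.Ioo (u + x) (v + x) = Set.Ioo u v := by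
      ext z; simp [Set.mem_Ioo]
    have h2 : Measure.map (fun z : ℝ => z + x) (c • volume.restrict (Set.Ioo u v))
        = c • volume.restrict (Set.Ioo (u + x) (v + x)) := by
      rw [Measure.map_smul]
      congr 1
      rw [← hpre, ← Measure.restrict_map hmeas measurableSet_Ioo,
        map_add_right_eq_self volume x]
    have h3 : c • volume.restrict (Set.Ioo (u + x) (v + x))
        ≤ Measure.map (fun z => z + x) μ := by
      rw [← h2]; exact Measure.map_mono h1 hmeas
    set I := Set.Ioo (max u (u + x)) (min v (v + x)) with hI
    have hIsub1 : I ⊆ Set.Ioo u v :=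
      Set.Ioo_subset_Ioo (le_max_left _ _) (min_le_left _ _)
    have hIsub2 : I ⊆ Set.Ioo (u + x) (v + x) :=
      Set.Ioo_subset_Ioo (le_max_right _ _) (min_le_right _ _)
    have hsmul : ∀ s t : Set ℝ, s ⊆ t →
        c • volume.restrict s ≤ c • volume.restrict t := by
      intro s t hst
      refine Measure.le_iff'.mpr fun A => ?_
      simp only [Measure.smul_apply, smul_eq_mul]
      exact mul_le_mul_right (Measure.restrict_mono hst le_rfl A) c
    have hρ : c • volume.restrict I ≤ μ ⊓ Measure.map (fun z => z + x) μ := by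
      refine le_inf ?_ ?_
      · exact le_trans (hsmul _ _ hIsub1) h1
      · exact le_trans (hsmul _ _ hIsub2) h3
    have hval : (c • volume.restrict I) Set.univ
        = c * ENNReal.ofReal (min v (v + x) - max u (u + x)) := by
      simp [hI, Real.volume_Ioo]
    have hlen : (v - u) / 2 ≤ min v (v + x) - max u (u + x) := by
      rcases abs_le.mp hx with ⟨h1x, h2x⟩
      rcases le_total x 0 with hx0 | hx0
      · rw [min_eq_right (by linarith), max_eq_left (by linarith)]
        linarith
      · rw [min_eq_left (by linarith), max_eq_right (by linarith)]
        linarith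
    calc ENNReal.ofReal (r * (v - u) / 2)
        ≤ c * ENNReal.ofReal (min v (v + x) - max u (u + x)) := by
          rw [hc, ← ENNReal.ofReal_mul hr.le, mul_div_assoc]
          exact ENNReal.ofReal_le_ofReal (by
            have := mul_le_mul_of_nonneg_left hlen hr.le; linarith)
      _ = (c • volume.restrict I) Set.univ := hval.symm
      _ ≤ (μ ⊓ Measure.map (fun z => z + x) μ) Set.univ := hρ _
  refine ⟨key m hmlow, ?_⟩
  intro μ ν hμs hνs hdisj x hx
  have main : ∀ (μ : Measure ℝ), μ (Set.Iic 0) = 0 →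
      (∀ A : Set ℝ, MeasurableSet A →
        ENNReal.ofReal r * volume (A ∩ Set.Ioo u v) ≤ μ A) →
      ENNReal.ofReal (r * (v - u) / 2)
        ≤ (μ ⊓ Measure.map (fun z => z + x) μ) (Set.Ioi 0) := by
    intro μ hμs hlow
    have hzero : (μ ⊓ Measure.map (fun z => z + x) μ) (Set.Iic 0) = 0 :=
      le_antisymm (le_trans (Measure.le_iff'.mp inf_le_left _) hμs.le) zero_le
    have hcompl : Set.univ = Set.Ioi (0:ℝ) ∪ Set.Iic 0 := by
      rw [Set.union_comm, Set.Iic_union_Ioi]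
    calc ENNReal.ofReal (r * (v - u) / 2)
        ≤ (μ ⊓ Measure.map (fun z => z + x) μ) Set.univ := key μ hlow x hx
      _ ≤ (μ ⊓ Measure.map (fun z => z + x) μ) (Set.Ioi 0)
          + (μ ⊓ Measure.map (fun z => z + x) μ) (Set.Iic 0) := by
          rw [hcompl]; exact measure_union_le _ _
      _ = (μ ⊓ Measure.map (fun z => z + x) μ) (Set.Ioi 0) := by
          rw [hzero, add_zero]
  rcases hdisj with h | h
  · exact le_trans (main μ hμs h) le_self_add
  · exact le_trans (main ν hνs h) le_add_self
end

section
/- Let σ > 0, β > 0, take b = 0, c = 0, ν = 0, μ(dz) = σ z^{−2} dz and g(x) = σ x log(1+x) in the generator L. Then for V_log(x) = log(1+x) one has LV_log(x) = (σx + β)/(1+x) for all x ≥ 0, so there exists λ > 0 (e.g. λ = min(σ, β)) with LV_log(x) ≥ λ for all x ≥ 0; in particular there are no constants C₀ > 0, C₁ > 0 with LV_log(x) ≤ C₀ − C₁ log(1+x) for all x ≥ 0, i.e. V_log is not a Lyapunov function. -/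
open MeasureTheory Set Filter Topology

/-- The Lévy measure `μ(dz) = σ z⁻² dz` on `(0,∞)` (Neveu branching case). -/
noncomputable def muNeveu (σ : ℝ) : Measure ℝ :=
  (volume.restrict (Set.Ioi (0 : ℝ))).withDensity (fun z => ENNReal.ofReal (σ / z ^ 2))


lemma hlog (a z : ℝ) (h : 0 < 1 + a * z) :
    HasDerivAt (fun z => Real.log (1 + a * z)) (a / (1 + a * z)) z := by
  have h1 : HasDerivAt (fun z : ℝ => 1 + a * z) a z := by
    simpa using ((hasDerivAt_id z).const_mul a).const_add 1
  rw [div_eq_inv_mul]; exact (Real.hasDerivAt_log h.ne').comp z h1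

-- derivative of G on (0,1]
lemma hG (a z : ℝ) (ha : 0 < a) (hz : 0 < z) :
    HasDerivAt (fun z => -(Real.log (1 + a * z)) / z - a * Real.log (1 + a * z))
      (Real.log (1 + a * z) / z ^ 2 - a / z) z := by
  have hpos : 0 < 1 + a * z := by positivity
  have h1 := hlog a z hpos
  have hd : HasDerivAt (fun z => -(Real.log (1 + a * z)) / z)
      ((-(a / (1 + a * z)) * z - -(Real.log (1 + a * z)) * 1) / z ^ 2) z :=
    (h1.neg).div (hasDerivAt_id z) hz.ne'
  have := hd.sub (h1.const_mul a)
  refine this.congr_deriv ?_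
  field_simp
  ring

-- derivative of F on (1,∞) (indeed z>0)
lemma hF (a z : ℝ) (ha : 0 < a) (hz : 0 < z) :
    HasDerivAt (fun z => -(Real.log (1 + a * z)) / z + a * (Real.log z - Real.log (1 + a * z)))
      (Real.log (1 + a * z) / z ^ 2) z := by
  have hpos : 0 < 1 + a * z := by positivity
  have h1 := hlog a z hpos
  have hd : HasDerivAt (fun z => -(Real.log (1 + a * z)) / z)
      ((-(a / (1 + a * z)) * z - -(Real.log (1 + a * z)) * 1) / z ^ 2) z :=
    (h1.neg).div (hasDerivAt_id z) hz.ne'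
  have := hd.add ((((Real.hasDerivAt_log hz.ne').sub h1)).const_mul a)
  refine this.congr_deriv ?_
  field_simp
  ring

-- limit of log(1+az)/z at infinity
lemma lim_top (a : ℝ) (ha : 0 < a) :
    Tendsto (fun z => Real.log (1 + a * z) / z) atTop (𝓝 0) := by
  have hlogdiv : Tendsto (fun t : ℝ => Real.log t / t) atTop (𝓝 0) := by
    simpa using Real.tendsto_pow_log_div_mul_add_atTop 1 0 1 one_ne_zero
  have h1 : Tendsto (fun z : ℝ => 1 + a * z) atTop atTop :=
    tendsto_atTop_add_const_left _ 1 (tendsto_id.const_mul_atTop ha)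
  have h2 : Tendsto (fun z : ℝ => Real.log (1 + a * z) / (1 + a * z)) atTop (𝓝 0) :=
    hlogdiv.comp h1
  have h3 : Tendsto (fun z : ℝ => 1 / z + a) atTop (𝓝 (0 + a)) :=
    (tendsto_inv_atTop_zero.congr fun z => (one_div z).symm).add tendsto_const_nhds
  have h4 := h2.mul h3
  rw [zero_mul] at h4
  refine h4.congr' ?_
  filter_upwards [eventually_gt_atTop (0:ℝ)] with z hz
  have : (0:ℝ) < 1 + a * z := by positivity
  field_simp

lemma lim_F (a : ℝ) (ha : 0 < a) :
    Tendsto (fun z => -(Real.log (1 + a * z)) / z + a * (Real.log z - Real.log (1 + a * z)))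
      atTop (𝓝 (-(a * Real.log a))) := by
  have h1 : Tendsto (fun z : ℝ => -(Real.log (1 + a * z)) / z) atTop (𝓝 0) := by
    have := (lim_top a ha).neg
    rw [neg_zero] at this
    exact this.congr fun z => by rw [neg_div]
  have h2 : Tendsto (fun z : ℝ => z / (1 + a * z)) atTop (𝓝 a⁻¹) := by
    have h3 : Tendsto (fun z : ℝ => 1 / (1 / z + a)) atTop (𝓝 (1 / (0 + a))) := by
      refine Tendsto.div tendsto_const_nhds ?_ (by simpa using ha.ne')
      exact (tendsto_inv_atTop_zero.congr fun z => (one_div z).symm).add tendsto_const_nhds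
    rw [zero_add, one_div] at h3
    refine h3.congr' ?_
    filter_upwards [eventually_gt_atTop (0:ℝ)] with z hz
    have : (0:ℝ) < 1 + a * z := by positivity
    field_simp
  have h4 : Tendsto (fun z : ℝ => a * (Real.log z - Real.log (1 + a * z))) atTop
      (𝓝 (a * Real.log a⁻¹)) := by
    have hc : Tendsto (fun z : ℝ => Real.log (z / (1 + a * z))) atTop (𝓝 (Real.log a⁻¹)) :=
      (Real.continuousAt_log (by positivity : (0:ℝ) < a⁻¹).ne').tendsto.comp h2
    refine (hc.const_mul a).congr' ?_
    filter_upwards [eventually_gt_atTop (0:ℝ)] with z hz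
    have hp : (0:ℝ) < 1 + a * z := by positivity
    rw [Real.log_div hz.ne' hp.ne']
  have := h1.add h4
  rw [zero_add, Real.log_inv, mul_neg] at this
  exact this

lemma lim_log_div0 (a : ℝ) (ha : 0 < a) :
    Tendsto (fun z => Real.log (1 + a * z) / z) (𝓝[>] (0:ℝ)) (𝓝 a) := by
  have hd : HasDerivAt (fun z => Real.log (1 + a * z)) a 0 := by
    simpa using hlog a 0 (by norm_num)
  have h := hasDerivAt_iff_tendsto_slope.1 hd
  have h' := h.mono_left (nhdsWithin_mono _ (fun z hz => ne_of_gt hz))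
  refine h'.congr' ?_
  filter_upwards [self_mem_nhdsWithin] with z hz
  simp [slope, Real.log_one, div_eq_inv_mul]

lemma lim_G0 (a : ℝ) (ha : 0 < a) :
    Tendsto (fun z => -(Real.log (1 + a * z)) / z - a * Real.log (1 + a * z))
      (𝓝[>] (0:ℝ)) (𝓝 (-a)) := by
  have h1 : Tendsto (fun z => -(Real.log (1 + a * z)) / z) (𝓝[>] (0:ℝ)) (𝓝 (-a)) := by
    have := (lim_log_div0 a ha).neg
    exact this.congr fun z => by rw [neg_div]
  have h2 : Tendsto (fun z => a * Real.log (1 + a * z)) (𝓝[>] (0:ℝ)) (𝓝 0) := by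
    have h0 : Tendsto (fun z : ℝ => 1 + a * z) (𝓝 0) (𝓝 1) := by
      have : ContinuousAt (fun z : ℝ => 1 + a * z) 0 := by fun_prop
      simpa using this.tendsto
    have hl := (Real.continuousAt_log one_ne_zero).tendsto.comp h0
    have := (hl.const_mul a).mono_left (nhdsWithin_le_nhds (s := Set.Ioi (0:ℝ)))
    simpa [Function.comp] using this
  simpa using h1.sub h2

lemma F_one (a : ℝ) :
    -(Real.log (1 + a * 1)) / 1 + a * (Real.log 1 - Real.log (1 + a * 1))
      = -((1 + a) * Real.log (1 + a)) := by
  simp [Real.log_one]; ring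

lemma piece2 (a : ℝ) (ha : 0 < a) :
    IntegrableOn (fun z => Real.log (1 + a * z) / z ^ 2) (Set.Ioi (1:ℝ)) ∧
    ∫ z in Set.Ioi (1:ℝ), Real.log (1 + a * z) / z ^ 2
      = -(a * Real.log a) + (1 + a) * Real.log (1 + a) := by
  set F : ℝ → ℝ := fun z => -(Real.log (1 + a * z)) / z + a * (Real.log z - Real.log (1 + a * z))
  have hderiv : ∀ z ∈ Set.Ioi (1:ℝ), HasDerivAt F (Real.log (1 + a * z) / z ^ 2) z :=
    fun z hz => hF a z ha (lt_trans one_pos hz)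
  have hcont : ContinuousWithinAt F (Set.Ici (1:ℝ)) 1 :=
    (hF a 1 ha one_pos).continuousAt.continuousWithinAt
  have hpos : ∀ z ∈ Set.Ioi (1:ℝ), 0 ≤ Real.log (1 + a * z) / z ^ 2 := by
    intro z hz
    have hz0 : (0:ℝ) < z := lt_trans one_pos hz
    have : (0:ℝ) ≤ Real.log (1 + a * z) := Real.log_nonneg (by nlinarith)
    positivity
  have htend : Tendsto F atTop (𝓝 (-(a * Real.log a))) := lim_F a ha
  constructor
  · exact integrableOn_Ioi_deriv_of_nonneg hcont hderiv hpos htend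
  · rw [integral_Ioi_of_hasDerivAt_of_nonneg hcont hderiv hpos htend]
    have : F 1 = -((1 + a) * Real.log (1 + a)) := F_one a
    rw [this]; ring

lemma log_bounds {t : ℝ} (ht : 0 < t) :
    t / (1 + t) ≤ Real.log (1 + t) ∧ Real.log (1 + t) ≤ t := by
  have h1 : (0:ℝ) < 1 + t := by linarith
  constructor
  · have := Real.log_le_sub_one_of_pos (x := (1+t)⁻¹) (by positivity)
    rw [Real.log_inv] at this
    have h2 : (1+t)⁻¹ - 1 = -(t/(1+t)) := by field_simp; ring
    linarith [this, h2 ▸ this]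
  · have := Real.log_le_sub_one_of_pos h1
    linarith

lemma piece1_integrable (a : ℝ) (ha : 0 < a) :
    IntegrableOn (fun z => (Real.log (1 + a * z) - a * z) / z ^ 2) (Set.Ioc (0:ℝ) 1) := by
  have hmeas : Measurable (fun z : ℝ => (Real.log (1 + a * z) - a * z) / z ^ 2) := by
    apply Measurable.div
    · exact (Real.measurable_log.comp (by fun_prop)).sub (by fun_prop)
    · fun_prop
  refine ⟨hmeas.aestronglyMeasurable.restrict, ?_⟩
  refine HasFiniteIntegral.restrict_of_bounded (C := a ^ 2) (by simp) ?_
  rw [ae_restrict_iff' measurableSet_Ioc]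
  refine Filter.Eventually.of_forall fun z hz => ?_
  obtain ⟨hz0, hz1⟩ := hz
  have ht : 0 < a * z := by positivity
  obtain ⟨hlo, hhi⟩ := log_bounds ht
  have h1 : (0:ℝ) < 1 + a * z := by linarith
  have key : 0 ≤ a * z - Real.log (1 + a * z) := by linarith
  have key2 : a * z - Real.log (1 + a * z) ≤ (a * z) ^ 2 := by
    have : a * z - a * z / (1 + a * z) = (a*z)^2 / (1 + a*z) := by field_simp; ring
    have h3 : (a*z)^2 / (1 + a*z) ≤ (a*z)^2 := by
      apply div_le_self (by positivity); linarith
    linarith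
  rw [Real.norm_eq_abs, abs_div, abs_of_nonpos (by linarith), abs_of_nonneg (by positivity)]
  rw [div_le_iff₀ (by positivity)]
  calc -(Real.log (1 + a * z) - a * z) = a * z - Real.log (1 + a * z) := by ring
    _ ≤ (a * z) ^ 2 := key2
    _ = a ^ 2 * z ^ 2 := by ring

lemma piece1 (a : ℝ) (ha : 0 < a) :
    ∫ z in Set.Ioc (0:ℝ) 1, (Real.log (1 + a * z) - a * z) / z ^ 2
      = -((1 + a) * Real.log (1 + a)) + a := by
  set G : ℝ → ℝ := fun z => -(Real.log (1 + a * z)) / z - a * Real.log (1 + a * z) with hGdef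
  set Gt : ℝ → ℝ := fun z => if z = 0 then -a else G z with hGtdef
  have hGt_eq : ∀ z : ℝ, z ≠ 0 → Gt z = G z := fun z hz => if_neg hz
  have hcontOn : ContinuousOn Gt (Set.Icc 0 1) := by
    intro z hz
    rcases eq_or_lt_of_le hz.1 with h0 | h0
    · subst h0
      rw [ContinuousWithinAt]
      have h1 : Tendsto Gt (𝓝[Set.Ioc (0:ℝ) 1] 0) (𝓝 (-a)) := by
        refine ((lim_G0 a ha).mono_left (nhdsWithin_mono _ Set.Ioc_subset_Ioi_self)).congr' ?_
        filter_upwards [self_mem_nhdsWithin] with y hy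
        exact (hGt_eq y (ne_of_gt hy.1)).symm
      have h2 : (𝓝[Set.Icc (0:ℝ) 1] 0) ≤ (𝓝[Set.Ioc (0:ℝ) 1] 0) ⊔ pure 0 := by
        rw [← nhdsWithin_singleton, ← nhdsWithin_union]
        apply nhdsWithin_mono
        intro y hy
        rcases eq_or_lt_of_le hy.1 with h | h
        · exact Or.inr (by simp [← h])
        · exact Or.inl ⟨h, hy.2⟩
      have h3 : Tendsto Gt ((𝓝[Set.Ioc (0:ℝ) 1] 0) ⊔ pure 0) (𝓝 (-a)) := by
        rw [tendsto_sup]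
        refine ⟨h1, ?_⟩
        have h4 := tendsto_pure_nhds Gt 0
        simpa [hGtdef] using h4
      simpa [hGtdef] using h3.mono_left h2
    · have hca : ContinuousAt Gt z := by
        have hGa : ContinuousAt G z := (hG a z ha h0).continuousAt
        apply hGa.congr
        filter_upwards [eventually_gt_nhds h0] with y hy
        exact (hGt_eq y (ne_of_gt hy)).symm
      exact hca.continuousWithinAt
  have hderiv : ∀ z ∈ Set.Ioo (0:ℝ) 1,
      HasDerivWithinAt Gt ((Real.log (1 + a * z) - a * z) / z ^ 2) (Set.Ioi z) z := by
    intro z hz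
    have hd : HasDerivAt G ((Real.log (1 + a * z) - a * z) / z ^ 2) z := by
      have := hG a z ha hz.1
      convert this using 1
      have hz0 : z ≠ 0 := ne_of_gt hz.1
      field_simp
    refine (hd.hasDerivWithinAt).congr ?_ (hGt_eq z (ne_of_gt hz.1))
    exact fun y hy => hGt_eq y (ne_of_gt (lt_trans hz.1 hy))
  have hint : IntervalIntegrable (fun z => (Real.log (1 + a * z) - a * z) / z ^ 2)
      volume 0 1 := by
    rw [intervalIntegrable_iff_integrableOn_Ioc_of_le zero_le_one]
    exact piece1_integrable a ha
  have := intervalIntegral.integral_eq_sub_of_hasDeriv_right_of_le zero_le_one hcontOn hderiv hint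
  rw [intervalIntegral.integral_of_le zero_le_one] at this
  rw [this]
  have hGt1 : Gt 1 = -((1 + a) * Real.log (1 + a)) := by
    rw [hGt_eq 1 one_ne_zero, hGdef]
    simp; ring
  have hGt0 : Gt 0 = -a := if_pos rfl
  rw [hGt1, hGt0]; ring

lemma key_integral (a : ℝ) (ha : 0 < a) :
    ∫ z in Set.Ioi (0:ℝ),
      (Real.log (1 + a * z) - a * z * (if z ≤ 1 then 1 else 0)) / z ^ 2
      = a - a * Real.log a := by
  set h : ℝ → ℝ := fun z =>
    (Real.log (1 + a * z) - a * z * (if z ≤ 1 then 1 else 0)) / z ^ 2 with hh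
  have heq1 : Set.EqOn h (fun z => (Real.log (1 + a * z) - a * z) / z ^ 2) (Set.Ioc 0 1) := by
    intro z hz; simp [hh, if_pos hz.2]
  have heq2 : Set.EqOn h (fun z => Real.log (1 + a * z) / z ^ 2) (Set.Ioi 1) := by
    intro z hz; simp [hh, if_neg (not_le.2 (show (1:ℝ) < z from hz))]
  have hsplit : Set.Ioc (0:ℝ) 1 ∪ Set.Ioi 1 = Set.Ioi 0 := Set.Ioc_union_Ioi_eq_Ioi zero_le_one
  have hi1 : IntegrableOn h (Set.Ioc (0:ℝ) 1) :=
    (piece1_integrable a ha).congr_fun heq1.symm measurableSet_Ioc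
  have hi2 : IntegrableOn h (Set.Ioi (1:ℝ)) :=
    (piece2 a ha).1.congr_fun heq2.symm measurableSet_Ioi
  rw [← hsplit, setIntegral_union (Set.Ioc_disjoint_Ioi le_rfl) measurableSet_Ioi hi1 hi2]
  rw [setIntegral_congr_fun measurableSet_Ioc heq1, setIntegral_congr_fun measurableSet_Ioi heq2]
  rw [piece1 a ha, (piece2 a ha).2]
  ring

lemma muNeveu_integral (σ : ℝ) (hσ : 0 < σ) (f : ℝ → ℝ) :
    ∫ z in Set.Ioi (0:ℝ), f z ∂(muNeveu σ)
      = ∫ z in Set.Ioi (0:ℝ), (σ / z ^ 2) * f z := by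
  have h1 : (muNeveu σ).restrict (Set.Ioi (0:ℝ))
      = (volume.restrict (Set.Ioi (0:ℝ))).withDensity (fun z => ENNReal.ofReal (σ / z ^ 2)) := by
    rw [muNeveu, restrict_withDensity measurableSet_Ioi,
      Measure.restrict_restrict measurableSet_Ioi, Set.inter_self]
  rw [show (∫ z in Set.Ioi (0:ℝ), f z ∂(muNeveu σ))
      = ∫ z, f z ∂((muNeveu σ).restrict (Set.Ioi (0:ℝ))) from rfl, h1]
  have hd : (fun z : ℝ => ENNReal.ofReal (σ / z ^ 2))
      = fun z : ℝ => ((σ / z ^ 2).toNNReal : ENNReal) := rfl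
  rw [hd, integral_withDensity_eq_integral_smul (by fun_prop) f]
  refine setIntegral_congr_fun measurableSet_Ioi fun z hz => ?_
  have hz0 : (0:ℝ) < z := hz
  rw [NNReal.smul_def, Real.coe_toNNReal _ (by positivity : (0:ℝ) ≤ σ / z ^ 2)]
  rfl
/-- `LV_log` for the Neveu mechanism with `b = c = 0`, `ν = 0`, immigration
drift `β` and competition mechanism `g`. -/
noncomputable def LVlogNeveu (σ β : ℝ) (g : ℝ → ℝ) (x : ℝ) : ℝ :=
  x * (∫ z in Set.Ioi (0 : ℝ),
      (Real.log (1 + z / (1 + x)) - (z / (1 + x)) * (if z ≤ 1 then 1 else 0)) ∂(muNeveu σ))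
    + (β - g x) / (1 + x)

/- Example 1.3 of Li–Li–Wang–Zhou (case `α = 1`): with `b = 0`, `c = 0`,
`ν = 0`, `μ(dz) = σ z⁻² dz`, `β > 0` and `g(x) = σ x log(1+x)`, one has
`LV_log(x) = (σx + β)/(1+x)` for all `x ≥ 0`, so `LV_log ≥ λ > 0` for
`λ = min(σ, β)`; in particular there are no constants `C₀ > 0`, `C₁ > 0` with
`LV_log(x) ≤ C₀ − C₁ log(1+x)` for all `x ≥ 0`, i.e. `V_log` is not a Lyapunov
function. -/
theorem Vlog_not_lyapunov_neveu
    (σ β : ℝ) (hσ : 0 < σ) (hβ : 0 < β) :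
    (∀ x : ℝ, 0 ≤ x →
        LVlogNeveu σ β (fun t => σ * t * Real.log (1 + t)) x = (σ * x + β) / (1 + x)) ∧
    (∃ lam : ℝ, lam = min σ β ∧ 0 < lam ∧ ∀ x : ℝ, 0 ≤ x →
        lam ≤ LVlogNeveu σ β (fun t => σ * t * Real.log (1 + t)) x) ∧
    ¬ (∃ C₀ > (0 : ℝ), ∃ C₁ > (0 : ℝ), ∀ x : ℝ, 0 ≤ x →
        LVlogNeveu σ β (fun t => σ * t * Real.log (1 + t)) x
          ≤ C₀ - C₁ * Real.log (1 + x)) := by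
  have hform : ∀ x : ℝ, 0 ≤ x →
      LVlogNeveu σ β (fun t => σ * t * Real.log (1 + t)) x = (σ * x + β) / (1 + x) := by
    intro x hx
    have hx1 : (0:ℝ) < 1 + x := by linarith
    set a : ℝ := (1 + x)⁻¹ with hadef
    have ha : 0 < a := by positivity
    have hzdiv : ∀ z : ℝ, z / (1 + x) = a * z := fun z => by
      rw [hadef, div_eq_mul_inv, mul_comm]
    have hI : (∫ z in Set.Ioi (0 : ℝ),
        (Real.log (1 + z / (1 + x)) - (z / (1 + x)) * (if z ≤ 1 then 1 else 0)) ∂(muNeveu σ))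
        = σ * (a - a * Real.log a) := by
      rw [muNeveu_integral σ hσ]
      rw [show (∫ z in Set.Ioi (0:ℝ), (σ / z ^ 2) *
            (Real.log (1 + z / (1 + x)) - (z / (1 + x)) * (if z ≤ 1 then 1 else 0)))
          = ∫ z in Set.Ioi (0:ℝ), σ *
            ((Real.log (1 + a * z) - a * z * (if z ≤ 1 then 1 else 0)) / z ^ 2) by
        refine setIntegral_congr_fun measurableSet_Ioi fun z hz => ?_
        rw [hzdiv z]
        have hz0 : (0:ℝ) < z := hz
        field_simp]
      rw [integral_const_mul, key_integral a ha]
    rw [LVlogNeveu, hI]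
    have hloga : Real.log a = -Real.log (1 + x) := by rw [hadef, Real.log_inv]
    rw [hloga, hadef]
    have hL : a - a * Real.log a = (1 + x)⁻¹ * (1 + Real.log (1 + x)) := by
      rw [hloga, hadef]; ring
    field_simp
    ring
  have hlam : ∀ x : ℝ, 0 ≤ x →
      min σ β ≤ LVlogNeveu σ β (fun t => σ * t * Real.log (1 + t)) x := by
    intro x hx
    rw [hform x hx]
    have hx1 : (0:ℝ) < 1 + x := by linarith
    rw [le_div_iff₀ hx1]
    have h1 : min σ β ≤ σ := min_le_left _ _
    have h2 : min σ β ≤ β := min_le_right _ _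
    nlinarith
  refine ⟨hform, ⟨min σ β, rfl, lt_min hσ hβ, hlam⟩, ?_⟩
  rintro ⟨C₀, hC0, C₁, hC1, h⟩
  set x := Real.exp (C₀ / C₁) with hxdef
  have hx : (0:ℝ) ≤ x := (Real.exp_pos _).le
  have h1 := h x hx
  have h2 := hlam x hx
  have h3 : C₀ / C₁ ≤ Real.log (1 + x) := by
    rw [← Real.log_exp (C₀ / C₁)]
    exact Real.log_le_log (Real.exp_pos _) (by linarith)
  have h4 : C₀ - C₁ * Real.log (1 + x) ≤ 0 := by
    have := mul_le_mul_of_nonneg_left h3 hC1.le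
    rw [mul_div_cancel₀ _ (ne_of_gt hC1)] at this
    linarith
  have h5 : (0:ℝ) < min σ β := lt_min hσ hβ
  linarith
end

section
/- For every α with 0 < α < 1 and every x ≥ 0: ∫₁^∞ log(1 + z/(1+x)) z^{−1−α} dz = ∫₀^1 [ z/(1+x) − log(1 + z/(1+x)) ] z^{−1−α} dz + π/( α sin(απ) (1+x)^α ) − 1/( (1−α)(1+x) ). -/
open MeasureTheory Set Real Filter

lemma aux_beta {α : ℝ} (hα0 : 0 < α) (hα1 : α < 1) :
    ∫ x in (0:ℝ)..1, x ^ (-α) * (1-x) ^ (α-1) = Real.pi / Real.sin (Real.pi * α) := by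
  have hs : 0 < ((((1:ℝ)-α : ℝ) : ℂ)).re := by simp; linarith
  have ht : 0 < ((α : ℂ)).re := by simpa using hα0
  have h1 := Complex.Gamma_mul_Gamma_eq_betaIntegral hs ht
  have hbeta : Complex.betaIntegral ((1:ℝ)-α : ℝ) (α : ℝ)
      = ((∫ x in (0:ℝ)..1, x ^ (-α) * (1-x) ^ (α-1) : ℝ) : ℂ) := by
    rw [Complex.betaIntegral, ← intervalIntegral.integral_ofReal]
    apply intervalIntegral.integral_congr
    intro y hy
    rw [Set.uIcc_of_le (by norm_num : (0:ℝ) ≤ 1)] at hy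
    obtain ⟨hy0, hy1⟩ := hy
    have e1 : ((((1:ℝ)-α : ℝ) : ℂ)) - 1 = ((-α : ℝ) : ℂ) := by push_cast; ring
    have e2 : ((α : ℂ)) - 1 = ((α - 1 : ℝ) : ℂ) := by push_cast; ring
    show (y:ℂ) ^ ((((1:ℝ)-α : ℝ) : ℂ) - 1) * ((1:ℂ) - y) ^ (((α:ℝ):ℂ) - 1) = _
    rw [e1, e2]
    rw [show ((1:ℂ) - (y:ℝ)) = (((1 - y : ℝ)) : ℂ) by push_cast; ring]
    rw [← Complex.ofReal_cpow hy0, ← Complex.ofReal_cpow (by linarith)]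
    push_cast
    ring
  have hsum : (((1:ℝ)-α : ℝ) : ℂ) + ((α:ℝ) : ℂ) = 1 := by push_cast; ring
  rw [hbeta, hsum, Complex.Gamma_one, one_mul, Complex.Gamma_ofReal,
    Complex.Gamma_ofReal, ← Complex.ofReal_mul] at h1
  have h2 : Real.Gamma (1-α) * Real.Gamma α
      = ∫ x in (0:ℝ)..1, x ^ (-α) * (1-x) ^ (α-1) := by exact_mod_cast h1
  rw [← h2, mul_comm, Real.Gamma_mul_Gamma_one_sub]

lemma aux_K {α : ℝ} (hα0 : 0 < α) (hα1 : α < 1) :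
    ∫ t in Ioi (0:ℝ), t ^ (-α) / (1+t) = Real.pi / Real.sin (Real.pi * α) := by
  have hderiv : ∀ u ∈ Ioo (0:ℝ) 1,
      HasDerivWithinAt (fun u : ℝ => u / (1-u)) (1/(1-u)^2) (Ioo (0:ℝ) 1) u := by
    intro u hu
    have h1 : (1:ℝ) - u ≠ 0 := by rcases hu with ⟨_, h⟩; intro hc; linarith
    have := (hasDerivAt_id u).div ((hasDerivAt_id u).const_sub 1) h1
    refine this.hasDerivWithinAt.congr_deriv ?_
    simp only [id]; ring
  have hinj : InjOn (fun u : ℝ => u / (1-u)) (Ioo 0 1) := by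
    intro u hu v hv h
    have h1 : (1:ℝ) - u ≠ 0 := by intro hc; rcases hu with ⟨_, h'⟩; simp at *; linarith
    have h2 : (1:ℝ) - v ≠ 0 := by intro hc; rcases hv with ⟨_, h'⟩; simp at *; linarith
    field_simp at h
    linarith
  have himg : (fun u : ℝ => u / (1-u)) '' (Ioo 0 1) = Ioi 0 := by
    ext t
    constructor
    · rintro ⟨u, ⟨hu0, hu1⟩, rfl⟩
      exact div_pos hu0 (by linarith)
    · intro ht
      have ht' : (0:ℝ) < t := ht
      refine ⟨t/(1+t), ⟨div_pos ht' (by linarith), (div_lt_one (by linarith)).mpr (by linarith)⟩, ?_⟩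
      have h1 : (1:ℝ) + t ≠ 0 := by positivity
      field_simp; ring
  have key := integral_image_eq_integral_abs_deriv_smul measurableSet_Ioo hderiv hinj
      (fun t : ℝ => t ^ (-α) / (1+t))
  rw [himg] at key
  rw [key]
  have hcongr : ∫ u in Ioo (0:ℝ) 1, |1/(1-u)^2| • ((u/(1-u)) ^ (-α) / (1 + u/(1-u)))
      = ∫ u in Ioo (0:ℝ) 1, u ^ (-α) * (1-u) ^ (α-1) := by
    apply setIntegral_congr_fun measurableSet_Ioo
    intro u hu
    rcases hu with ⟨hu0, hu1⟩
    have h1 : (0:ℝ) < 1 - u := by linarith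
    have h2 : (1:ℝ) + u/(1-u) = 1/(1-u) := by field_simp; ring
    have h3 : (u/(1-u)) ^ (-α) = u ^ (-α) / (1-u) ^ (-α) := Real.div_rpow hu0.le h1.le _
    have h4 : (1-u) ^ (α-1) = (1-u) ^ α / (1-u) := by
      rw [Real.rpow_sub h1, Real.rpow_one]
    have h5 : (1-u) ^ (-α) = ((1-u) ^ α)⁻¹ := Real.rpow_neg h1.le α
    have h6 : (0:ℝ) < (1-u) ^ α := Real.rpow_pos_of_pos h1 α
    show |1/(1-u)^2| • ((u/(1-u)) ^ (-α) / (1 + u/(1-u))) = u ^ (-α) * (1-u) ^ (α-1)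
    rw [smul_eq_mul, h2, h3, h5, h4, abs_of_pos (by positivity)]
    field_simp
  rw [hcongr, ← integral_Ioc_eq_integral_Ioo,
    ← intervalIntegral.integral_of_le (by norm_num : (0:ℝ) ≤ 1)]
  exact aux_beta hα0 hα1

lemma meas_aux {α c : ℝ} : AEStronglyMeasurable (fun z : ℝ => Real.log (1 + z/c) / z ^ (1+α)) volume := by
  apply Measurable.aestronglyMeasurable
  exact (Real.measurable_log.comp (measurable_const.add (measurable_id.div_const c))).div
    (measurable_id.pow_const _)

lemma meas_aux2 {α : ℝ} : AEStronglyMeasurable (fun t : ℝ => t ^ (-α) / (1+t)) volume := by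
  apply Measurable.aestronglyMeasurable
  fun_prop

lemma int_rpow_Ioc {α : ℝ} (hα1 : α < 1) :
    IntegrableOn (fun z : ℝ => z ^ (-α)) (Ioc (0:ℝ) 1) := by
  rw [← intervalIntegrable_iff_integrableOn_Ioc_of_le (by norm_num : (0:ℝ) ≤ 1)]
  exact intervalIntegral.intervalIntegrable_rpow' (by linarith)

lemma aux_intK {α : ℝ} (hα0 : 0 < α) (hα1 : α < 1) :
    IntegrableOn (fun t : ℝ => t ^ (-α) / (1+t)) (Ioi (0:ℝ)) := by
  rw [← Ioc_union_Ioi_eq_Ioi (zero_le_one)]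
  apply IntegrableOn.union
  · apply Integrable.mono (int_rpow_Ioc hα1) (meas_aux2.restrict)
    filter_upwards [ae_restrict_mem measurableSet_Ioc] with t ht
    rcases ht with ⟨ht0, ht1⟩
    have h1 : (0:ℝ) < t ^ (-α) := Real.rpow_pos_of_pos ht0 _
    rw [Real.norm_eq_abs, Real.norm_eq_abs, abs_of_pos h1, abs_of_pos (by positivity)]
    rw [div_le_iff₀ (by linarith)]
    nlinarith
  · apply Integrable.mono (integrableOn_Ioi_rpow_of_lt (by linarith : -α + -1 < -1) one_pos)
      (meas_aux2.restrict)
    filter_upwards [ae_restrict_mem measurableSet_Ioi] with t (ht : 1 < t)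
    have ht0 : (0:ℝ) < t := by linarith
    have h1 : (0:ℝ) < t ^ (-α) := Real.rpow_pos_of_pos ht0 _
    have h2 : (0:ℝ) < t ^ (-α + -1) := Real.rpow_pos_of_pos ht0 _
    rw [Real.norm_eq_abs, Real.norm_eq_abs, abs_of_pos (by positivity), abs_of_pos h2]
    rw [Real.rpow_add ht0, Real.rpow_neg_one, div_le_iff₀ (by linarith)]
    have h3 : (1:ℝ) ≤ t⁻¹ * (1+t) := by
      rw [inv_mul_eq_div, le_div_iff₀ ht0]
      linarith
    rw [mul_assoc]
    nlinarith [mul_le_mul_of_nonneg_left h3 h1.le]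

lemma aux_intL_Ioc {α c : ℝ} (hα0 : 0 < α) (hα1 : α < 1) (hc : 1 ≤ c) :
    IntegrableOn (fun z : ℝ => Real.log (1 + z/c) / z ^ (1+α)) (Ioc (0:ℝ) 1) := by
  have hc0 : (0:ℝ) < c := by linarith
  apply Integrable.mono (int_rpow_Ioc hα1) (meas_aux.restrict)
  filter_upwards [ae_restrict_mem measurableSet_Ioc] with z hz
  rcases hz with ⟨hz0, hz1⟩
  have harg : (0:ℝ) < 1 + z/c := by positivity
  have hlog0 : 0 ≤ Real.log (1 + z/c) := Real.log_nonneg (by nlinarith [div_pos hz0 hc0])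
  have hlogle : Real.log (1 + z/c) ≤ z/c := by
    have := Real.log_le_sub_one_of_pos harg
    linarith
  have hzc : z / c ≤ z := by
    rw [div_le_iff₀ hc0]
    nlinarith
  have hzp : (0:ℝ) < z ^ (1+α) := Real.rpow_pos_of_pos hz0 _
  rw [Real.norm_eq_abs, Real.norm_eq_abs, abs_of_nonneg (by positivity),
    abs_of_pos (Real.rpow_pos_of_pos hz0 _)]
  rw [div_le_iff₀ hzp]
  calc Real.log (1 + z/c) ≤ z := le_trans hlogle hzc
    _ = z ^ (-α) * z ^ (1+α) := by
        rw [← Real.rpow_add hz0]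
        norm_num
lemma aux_intL_Ioi {α c : ℝ} (hα0 : 0 < α) (hα1 : α < 1) (hc : 1 ≤ c) :
    IntegrableOn (fun z : ℝ => Real.log (1 + z/c) / z ^ (1+α)) (Ioi (1:ℝ)) := by
  have hc0 : (0:ℝ) < c := by linarith
  have hint : IntegrableOn (fun z : ℝ => (4/α) * z ^ (-1 - α/2)) (Ioi (1:ℝ)) :=
    (integrableOn_Ioi_rpow_of_lt (by linarith : -1 - α/2 < -1) one_pos).const_mul _
  apply Integrable.mono hint (meas_aux.restrict)
  filter_upwards [ae_restrict_mem measurableSet_Ioi] with z (hz : 1 < z)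
  have hz0 : (0:ℝ) < z := by linarith
  have harg : (0:ℝ) < 1 + z/c := by positivity
  have hlog0 : 0 ≤ Real.log (1 + z/c) := Real.log_nonneg (by nlinarith [div_pos hz0 hc0])
  have hzp : (0:ℝ) < z ^ (1+α) := Real.rpow_pos_of_pos hz0 _
  have key : Real.log (1 + z/c) ≤ (4/α) * z ^ (α/2) := by
    have h1 : Real.log (1 + z/c) ≤ Real.log (1 + z) := by
      apply Real.log_le_log harg
      have : z / c ≤ z := by rw [div_le_iff₀ hc0]; nlinarith
      linarith
    have h2 : Real.log (1 + z) ≤ (1+z) ^ (α/2) / (α/2) :=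
      Real.log_le_rpow_div (by linarith) (by linarith)
    have h3 : ((1:ℝ)+z) ^ (α/2) ≤ (2*z) ^ (α/2) :=
      Real.rpow_le_rpow (by linarith) (by linarith) (by linarith)
    have h4 : ((2:ℝ)*z) ^ (α/2) = 2 ^ (α/2) * z ^ (α/2) :=
      Real.mul_rpow (by norm_num) hz0.le
    have h5 : (2:ℝ) ^ (α/2) ≤ 2 := by
      calc (2:ℝ) ^ (α/2) ≤ 2 ^ (1:ℝ) :=
            Real.rpow_le_rpow_of_exponent_le (by norm_num) (by linarith)
        _ = 2 := Real.rpow_one 2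
    have h6 : (0:ℝ) ≤ z ^ (α/2) := (Real.rpow_pos_of_pos hz0 _).le
    calc Real.log (1 + z/c) ≤ (1+z) ^ (α/2) / (α/2) := le_trans h1 h2
      _ ≤ (2 * z ^ (α/2)) / (α/2) := by
          apply div_le_div_of_nonneg_right _ (by linarith)
          · calc ((1:ℝ)+z) ^ (α/2) ≤ (2*z) ^ (α/2) := h3
              _ = 2 ^ (α/2) * z ^ (α/2) := h4
              _ ≤ 2 * z ^ (α/2) := mul_le_mul_of_nonneg_right h5 h6
      _ = (4/α) * z ^ (α/2) := by field_simp; ring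
  rw [Real.norm_eq_abs, Real.norm_eq_abs, abs_of_nonneg (by positivity)]
  have h7 : (0:ℝ) < z ^ (-1 - α/2) := Real.rpow_pos_of_pos hz0 _
  rw [abs_of_pos (by positivity)]
  rw [div_le_iff₀ hzp]
  calc Real.log (1 + z/c) ≤ (4/α) * z ^ (α/2) := key
    _ = 4/α * z ^ (-1-α/2) * z ^ (1+α) := by
        rw [mul_assoc, ← Real.rpow_add hz0]
        congr 1
        ring

lemma aux_intL_Ioi0 {α c : ℝ} (hα0 : 0 < α) (hα1 : α < 1) (hc : 1 ≤ c) :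
    IntegrableOn (fun z : ℝ => Real.log (1 + z/c) / z ^ (1+α)) (Ioi (0:ℝ)) := by
  rw [← Ioc_union_Ioi_eq_Ioi (zero_le_one)]
  exact (aux_intL_Ioc hα0 hα1 hc).union (aux_intL_Ioi hα0 hα1 hc)

lemma aux_J {α : ℝ} (hα0 : 0 < α) (hα1 : α < 1) :
    ∫ t in Ioi (0:ℝ), Real.log (1+t) / t ^ (1+α)
      = Real.pi / (α * Real.sin (Real.pi * α)) := by
  set u : ℝ → ℝ := fun t => Real.log (1+t) with hu_def
  set v : ℝ → ℝ := fun t => -(1/α) * t ^ (-α) with hv_def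
  set u' : ℝ → ℝ := fun t => (1+t)⁻¹ with hu'_def
  set v' : ℝ → ℝ := fun t => t ^ (-α-1) with hv'_def
  have hu : ∀ t ∈ Ioi (0:ℝ), HasDerivAt u (u' t) t := by
    intro t (ht : 0 < t)
    simpa [hu_def, hu'_def, Function.comp_def] using (Real.hasDerivAt_log (by linarith : (1:ℝ)+t ≠ 0)).comp t
      ((hasDerivAt_id t).const_add 1)
  have hv : ∀ t ∈ Ioi (0:ℝ), HasDerivAt v (v' t) t := by
    intro t (ht : 0 < t)
    have := (Real.hasDerivAt_rpow_const (x := t) (p := -α) (Or.inl ht.ne')).const_mul (-(1/α))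
    refine this.congr_deriv ?_
    simp only [hv'_def]; field_simp
  -- integrability of u * v'
  have huv' : IntegrableOn (u * v') (Ioi (0:ℝ)) := by
    apply (aux_intL_Ioi0 hα0 hα1 (le_refl 1)).congr_fun _ measurableSet_Ioi
    intro t (ht : 0 < t)
    have h1 : t ^ (-α-1) = (t ^ (1+α))⁻¹ := by
      rw [← Real.rpow_neg ht.le]
      congr 1
      ring
    simp only [Pi.mul_apply, hu_def, hv'_def, h1, div_one]
    rw [div_eq_mul_inv]
  have hu'v : IntegrableOn (u' * v) (Ioi (0:ℝ)) := by
    have hbase : IntegrableOn (fun t : ℝ => -(1/α) * (t ^ (-α) / (1+t))) (Ioi (0:ℝ)) :=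
      (aux_intK hα0 hα1).const_mul _
    apply hbase.congr_fun _ measurableSet_Ioi
    intro t (ht : 0 < t)
    simp only [Pi.mul_apply, hu'_def, hv_def]
    field_simp
  -- limit at 0+
  have h_zero : Tendsto (u * v) (nhdsWithin 0 (Ioi 0)) (nhds 0) := by
    have hb : Tendsto (fun t : ℝ => t ^ (1-α)) (nhdsWithin 0 (Ioi 0)) (nhds 0) := by
      have h := (Real.continuousAt_rpow_const 0 (1-α)
        (Or.inr (by linarith : (0:ℝ) ≤ 1-α))).continuousWithinAt (s := Ioi (0:ℝ))
      have h2 : Tendsto (fun t : ℝ => t ^ (1-α)) (nhdsWithin 0 (Ioi 0))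
          (nhds ((0:ℝ) ^ (1-α))) := h
      rwa [Real.zero_rpow (by linarith : (1:ℝ)-α ≠ 0)] at h2
    have hsq : Tendsto (fun t : ℝ => Real.log (1+t) * t ^ (-α)) (nhdsWithin 0 (Ioi 0)) (nhds 0) := by
      apply squeeze_zero' ?_ ?_ hb
      · filter_upwards [self_mem_nhdsWithin] with t (ht : 0 < t)
        have : (0:ℝ) ≤ Real.log (1+t) := Real.log_nonneg (by linarith)
        positivity
      · filter_upwards [self_mem_nhdsWithin] with t (ht : 0 < t)
        have hlog : Real.log (1+t) ≤ t := by
          have := Real.log_le_sub_one_of_pos (by linarith : (0:ℝ) < 1+t)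
          linarith
        have hrp : (0:ℝ) < t ^ (-α) := Real.rpow_pos_of_pos ht _
        calc Real.log (1+t) * t ^ (-α) ≤ t * t ^ (-α) :=
              mul_le_mul_of_nonneg_right hlog hrp.le
          _ = t ^ (1-α) := by
              rw [show (1:ℝ)-α = 1 + -α by ring, Real.rpow_add ht, Real.rpow_one]
    have : Tendsto (fun t : ℝ => -(1/α) * (Real.log (1+t) * t ^ (-α)))
        (nhdsWithin 0 (Ioi 0)) (nhds 0) := by
      simpa using hsq.const_mul (-(1/α))
    apply this.congr
    intro t
    simp only [Pi.mul_apply, hu_def, hv_def]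
    ring
  -- limit at infinity
  have h_infty : Tendsto (u * v) atTop (nhds 0) := by
    have hb : Tendsto (fun t : ℝ => 4/α * t ^ (-(α/2))) atTop (nhds 0) := by
      simpa using (tendsto_rpow_neg_atTop (by linarith : 0 < α/2)).const_mul (4/α)
    have hsq : Tendsto (fun t : ℝ => Real.log (1+t) * t ^ (-α)) atTop (nhds 0) := by
      apply squeeze_zero' ?_ ?_ hb
      · filter_upwards [eventually_gt_atTop 0] with t (ht : 0 < t)
        have : (0:ℝ) ≤ Real.log (1+t) := Real.log_nonneg (by linarith)
        positivity
      · filter_upwards [eventually_ge_atTop 1] with t (ht : 1 ≤ t)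
        have ht0 : (0:ℝ) < t := by linarith
        have h1 : Real.log (1+t) ≤ (1+t) ^ (α/2) / (α/2) :=
          Real.log_le_rpow_div (by linarith) (by linarith)
        have h3 : ((1:ℝ)+t) ^ (α/2) ≤ (2*t) ^ (α/2) :=
          Real.rpow_le_rpow (by linarith) (by linarith) (by linarith)
        have h4 : ((2:ℝ)*t) ^ (α/2) = 2 ^ (α/2) * t ^ (α/2) :=
          Real.mul_rpow (by norm_num) ht0.le
        have h5 : (2:ℝ) ^ (α/2) ≤ 2 := by
          calc (2:ℝ) ^ (α/2) ≤ 2 ^ (1:ℝ) :=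
                Real.rpow_le_rpow_of_exponent_le (by norm_num) (by linarith)
            _ = 2 := Real.rpow_one 2
        have h6 : (0:ℝ) ≤ t ^ (α/2) := (Real.rpow_pos_of_pos ht0 _).le
        have hkey : Real.log (1+t) ≤ 4/α * t ^ (α/2) := by
          calc Real.log (1+t) ≤ (1+t) ^ (α/2) / (α/2) := h1
            _ ≤ (2 * t ^ (α/2)) / (α/2) := by
                apply div_le_div_of_nonneg_right _ (by linarith)
                calc ((1:ℝ)+t) ^ (α/2) ≤ (2*t) ^ (α/2) := h3
                  _ = 2 ^ (α/2) * t ^ (α/2) := h4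
                  _ ≤ 2 * t ^ (α/2) := mul_le_mul_of_nonneg_right h5 h6
            _ = 4/α * t ^ (α/2) := by field_simp; ring
        have hrp : (0:ℝ) < t ^ (-α) := Real.rpow_pos_of_pos ht0 _
        calc Real.log (1+t) * t ^ (-α) ≤ (4/α * t ^ (α/2)) * t ^ (-α) :=
              mul_le_mul_of_nonneg_right hkey hrp.le
          _ = 4/α * t ^ (-(α/2)) := by
              rw [mul_assoc, ← Real.rpow_add ht0]
              congr 1
              ring
    have : Tendsto (fun t : ℝ => -(1/α) * (Real.log (1+t) * t ^ (-α))) atTop (nhds 0) := by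
      simpa using hsq.const_mul (-(1/α))
    apply this.congr
    intro t
    simp only [Pi.mul_apply, hu_def, hv_def]
    ring
  have hparts := integral_Ioi_mul_deriv_eq_deriv_mul hu hv huv' hu'v h_zero h_infty
  have hL : ∫ t in Ioi (0:ℝ), Real.log (1+t) / t ^ (1+α) = ∫ t in Ioi (0:ℝ), u t * v' t := by
    apply setIntegral_congr_fun measurableSet_Ioi
    intro t (ht : 0 < t)
    have h1 : t ^ (-α-1) = (t ^ (1+α))⁻¹ := by
      rw [← Real.rpow_neg ht.le]
      congr 1
      ring
    simp only [hu_def, hv'_def, h1]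
    rw [div_eq_mul_inv]
  have hR : ∫ t in Ioi (0:ℝ), u' t * v t
      = -(1/α) * ∫ t in Ioi (0:ℝ), t ^ (-α) / (1+t) := by
    rw [← integral_const_mul]
    apply setIntegral_congr_fun measurableSet_Ioi
    intro t (ht : 0 < t)
    simp only [hu'_def, hv_def]
    field_simp
  rw [hL, hparts, hR, aux_K hα0 hα1]
  have hsin : Real.sin (Real.pi * α) ≠ 0 := by
    apply ne_of_gt
    apply Real.sin_pos_of_pos_of_lt_pi
    · positivity
    · nlinarith [Real.pi_pos]
  field_simp; ring

lemma aux_P {α c : ℝ} (hα0 : 0 < α) (hα1 : α < 1) (hc : 1 ≤ c) :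
    ∫ z in Ioi (0:ℝ), Real.log (1 + z/c) / z ^ (1+α)
      = Real.pi / (α * Real.sin (α * Real.pi) * c ^ α) := by
  have hc0 : (0:ℝ) < c := by linarith
  have key := integral_comp_mul_left_Ioi
    (g := fun z : ℝ => Real.log (1 + z/c) / z ^ (1+α)) 0 hc0
  rw [mul_zero] at key
  have h1 : ∫ x in Ioi (0:ℝ), Real.log (1 + (c*x)/c) / (c*x) ^ (1+α)
      = c ^ (-(1+α)) * ∫ t in Ioi (0:ℝ), Real.log (1+t) / t ^ (1+α) := by
    rw [← integral_const_mul]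
    apply setIntegral_congr_fun measurableSet_Ioi
    intro t (ht : 0 < t)
    show Real.log (1 + (c*t)/c) / (c*t) ^ (1+α) = c ^ (-(1+α)) * (Real.log (1+t) / t ^ (1+α))
    have h2 : (c*t) ^ (1+α) = c ^ (1+α) * t ^ (1+α) := Real.mul_rpow hc0.le ht.le
    have h3 : c * t / c = t := by field_simp
    have h4 : c ^ (-(1+α)) = (c ^ (1+α))⁻¹ := Real.rpow_neg hc0.le _
    rw [h2, h3, h4]
    have h5 : (0:ℝ) < c ^ (1+α) := Real.rpow_pos_of_pos hc0 _
    field_simp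
  beta_reduce at key
  rw [h1, aux_J hα0 hα1, smul_eq_mul] at key
  have hI : ∫ z in Ioi (0:ℝ), Real.log (1 + z/c) / z ^ (1+α)
      = c * (c ^ (-(1+α)) * (Real.pi / (α * Real.sin (Real.pi * α)))) := by
    rw [key]
    field_simp
  rw [hI]
  have hsin : Real.sin (Real.pi * α) ≠ 0 := by
    apply ne_of_gt
    apply Real.sin_pos_of_pos_of_lt_pi
    · positivity
    · nlinarith [Real.pi_pos]
  have h6 : c ^ (-(1+α)) = (c ^ (1+α))⁻¹ := Real.rpow_neg hc0.le _
  have h7 : c ^ (1+α) = c * c ^ α := by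
    rw [Real.rpow_add hc0, Real.rpow_one]
  have h8 : (0:ℝ) < c ^ α := Real.rpow_pos_of_pos hc0 _
  rw [h6, h7, mul_comm α Real.pi]
  field_simp

/- Integral identity from the proof of Corollary 1.5 of Li–Li–Wang–Zhou: for
`0 < α < 1` and `x ≥ 0`,
`∫₁^∞ log(1+z/(1+x)) z^{−1−α} dz
  = ∫₀^1 [z/(1+x) − log(1+z/(1+x))] z^{−1−α} dz
    + π/(α sin(απ) (1+x)^α) − 1/((1−α)(1+x))`. -/
theorem integral_log_rpow_split
    (α : ℝ) (hα0 : 0 < α) (hα1 : α < 1) (x : ℝ) (hx : 0 ≤ x) :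
    ∫ z in Set.Ioi (1 : ℝ), Real.log (1 + z / (1 + x)) / z ^ (1 + α)
      = (∫ z in Set.Ioc (0 : ℝ) 1,
          (z / (1 + x) - Real.log (1 + z / (1 + x))) / z ^ (1 + α))
        + Real.pi / (α * Real.sin (α * Real.pi) * (1 + x) ^ α)
        - 1 / ((1 - α) * (1 + x)) := by
  set c : ℝ := 1 + x with hc_def
  have hc : (1:ℝ) ≤ c := by simp [hc_def]; linarith
  have hc0 : (0:ℝ) < c := by linarith
  -- split at 1
  have hsplit : (∫ z in Ioi (0:ℝ), Real.log (1 + z/c) / z ^ (1+α))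
      = (∫ z in Ioc (0:ℝ) 1, Real.log (1 + z/c) / z ^ (1+α))
        + ∫ z in Ioi (1:ℝ), Real.log (1 + z/c) / z ^ (1+α) := by
    rw [← Ioc_union_Ioi_eq_Ioi (zero_le_one : (0:ℝ) ≤ 1)]
    exact setIntegral_union (Ioc_disjoint_Ioi le_rfl) measurableSet_Ioi
      (aux_intL_Ioc hα0 hα1 hc) (aux_intL_Ioi hα0 hα1 hc)
  -- value of the rpow integral on (0,1]
  have hQ : (∫ z in Ioc (0:ℝ) 1, z ^ (-α)) = 1/(1-α) := by
    rw [← intervalIntegral.integral_of_le (zero_le_one : (0:ℝ) ≤ 1)]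
    rw [integral_rpow (Or.inl (by linarith : (-1:ℝ) < -α))]
    rw [Real.one_rpow, Real.zero_rpow (by intro h; ring_nf at h; linarith : -α + 1 ≠ 0)]
    ring_nf
  -- decompose the Ioc integral
  have hB : (∫ z in Ioc (0:ℝ) 1, (z/c - Real.log (1 + z/c)) / z ^ (1+α))
      = 1/((1-α)*c) - ∫ z in Ioc (0:ℝ) 1, Real.log (1 + z/c) / z ^ (1+α) := by
    have heq : ∀ z ∈ Ioc (0:ℝ) 1, (z/c - Real.log (1 + z/c)) / z ^ (1+α)
        = z ^ (-α) / c - Real.log (1 + z/c) / z ^ (1+α) := by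
      intro z hz
      rcases hz with ⟨hz0, hz1⟩
      have hp : (0:ℝ) < z ^ (1+α) := Real.rpow_pos_of_pos hz0 _
      have h2 : z / z ^ (1+α) = z ^ (-α) := by
        rw [div_eq_iff hp.ne', ← Real.rpow_add hz0]
        norm_num
      rw [sub_div, div_right_comm, h2]
    rw [setIntegral_congr_fun measurableSet_Ioc heq]
    rw [integral_sub ((int_rpow_Ioc hα1).div_const c) (aux_intL_Ioc hα0 hα1 hc)]
    rw [integral_div, hQ]
    congr 1
    field_simp
  have hP := aux_P hα0 hα1 hc
  rw [hB]
  linarith [hsplit, hP]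
end

section
/- Let 0 < α < 1, σ > 0, a ∈ ℝ, c ≥ 0, β ≥ 0, let ν be a Borel measure on (0,∞) with ∫₀^∞(1∧z)ν(dz) < ∞ and ∫₁^∞ log(1+z) ν(dz) < ∞, let g : [0,∞) → [0,∞) be a nondecreasing continuous function with g(0) = 0, and take b = a + ασ/((1−α)Γ(1−α)) and μ(dz) = ασ Γ(1−α)^{−1} z^{−1−α} dz in the generator L (this corresponds to the stable branching mechanism Ψ(λ) = aλ + cλ² − σλ^α). If liminf_{x→∞} g(x)/x^{2−α} > σπ/(Γ(1−α) sin(απ)), then V_log(x) = log(1+x) is a Lyapunov function: there exist constants C₀ > 0 and C₁ > 0 such that LV_log(x) ≤ C₀ − C₁ log(1+x) for all x ≥ 0. -/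
open MeasureTheory

/-- The Lévy measure `μ(dz) = ασ Γ(1−α)⁻¹ z^{−1−α} dz` on `(0,∞)`,
corresponding to the stable branching mechanism `Ψ(λ) = aλ + cλ² − σλ^α` with
`0 < α < 1` (for which `b = a + ασ/((1−α)Γ(1−α))`). -/
noncomputable def muStable (α σ : ℝ) : Measure ℝ :=
  (volume.restrict (Set.Ioi (0 : ℝ))).withDensity
    (fun z => ENNReal.ofReal ((α * σ / Real.Gamma (1 - α)) * z ^ (-(1 + α))))


section Aux

open Real Set
open scoped ENNReal

lemma lint_gamma {p b : ℝ} (hp : 0 < p) (hb : 0 < b) :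
    ∫⁻ t in Set.Ioi (0:ℝ), ENNReal.ofReal (t ^ (p-1) * Real.exp (-(b*t)))
      = ENNReal.ofReal ((1/b) ^ p * Real.Gamma p) := by
  have hint : IntegrableOn (fun t : ℝ => t ^ (p-1) * Real.exp (-(b*t))) (Set.Ioi 0) := by
    have h1 : IntegrableOn (fun x : ℝ => Real.exp (-x) * x ^ (p-1)) (Set.Ioi 0) :=
      Real.GammaIntegral_convergent hp
    have h2 : IntegrableOn (fun t : ℝ => Real.exp (-(b*t)) * (b*t) ^ (p-1)) (Set.Ioi 0) := by
      have := (integrableOn_Ioi_comp_mul_left_iff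
        (fun x : ℝ => Real.exp (-x) * x ^ (p-1)) 0 hb).2 (by simpa using h1)
      simpa using this
    have h3 : IntegrableOn (fun t : ℝ => b ^ (1-p) * (Real.exp (-(b*t)) * (b*t) ^ (p-1))) (Set.Ioi 0) := h2.const_mul (b ^ (1-p))
    refine h3.congr_fun (fun t ht => ?_) measurableSet_Ioi
    have ht0 : (0:ℝ) < t := ht
    beta_reduce
    rw [Real.mul_rpow hb.le ht0.le]
    rw [show b ^ (1-p) * (Real.exp (-(b*t)) * (b ^ (p-1) * t ^ (p-1)))
      = (b ^ (1-p) * b ^ (p-1)) * (t ^ (p-1) * Real.exp (-(b*t))) by ring,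
      ← Real.rpow_add hb]
    norm_num
  rw [← Real.integral_rpow_mul_exp_neg_mul_Ioi hp hb]
  refine (ofReal_integral_eq_lintegral_ofReal hint ?_).symm
  filter_upwards [ae_restrict_mem measurableSet_Ioi] with t ht
  have ht0 : (0:ℝ) < t := ht
  positivity

lemma lint_rpow_Ioi {α t : ℝ} (hα0 : 0 < α) (ht : 0 < t) :
    ∫⁻ z in Set.Ioi t, ENNReal.ofReal (z ^ (-(1+α)))
      = ENNReal.ofReal (t ^ (-α) / α) := by
  have ha : -(1+α) < -1 := by linarith
  have hint := integrableOn_Ioi_rpow_of_lt ha ht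
  rw [← ofReal_integral_eq_lintegral_ofReal hint ?_]
  · rw [integral_Ioi_rpow_of_lt ha ht]
    congr 1
    rw [show -(1+α) + 1 = -α by ring]
    rw [neg_div, div_neg, neg_neg]
  · filter_upwards [ae_restrict_mem measurableSet_Ioi] with z hz
    have : (0:ℝ) < z := ht.trans hz
    positivity

lemma lint_log {y z : ℝ} (hy : 0 < y) (hz : 0 < z) :
    ENNReal.ofReal (Real.log (1 + z/y))
      = ∫⁻ t in Set.Ioo 0 z, ENNReal.ofReal ((y+t)⁻¹) := by
  have hcont : ContinuousOn (fun t : ℝ => (y+t)⁻¹) (Set.Icc 0 z) := by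
    refine ContinuousOn.inv₀ (by fun_prop) (fun t ht => ?_)
    have := ht.1; positivity
  have hint : IntegrableOn (fun t : ℝ => (y+t)⁻¹) (Set.Ioo 0 z) :=
    (hcont.integrableOn_Icc).mono_set Set.Ioo_subset_Icc_self
  rw [← ofReal_integral_eq_lintegral_ofReal hint ?_]
  · congr 1
    have h1 : ∫ t in Set.Ioo 0 z, (y+t)⁻¹ = ∫ t in Set.Ioc 0 z, (y+t)⁻¹ :=
      setIntegral_congr_set Ioo_ae_eq_Ioc
    have h2 : ∫ t in Set.Ioc 0 z, (y+t)⁻¹ = ∫ t in (0:ℝ)..z, (y+t)⁻¹ :=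
      (intervalIntegral.integral_of_le hz.le).symm
    have h3 : ∫ t in (0:ℝ)..z, (y+t)⁻¹ = ∫ s in y..(y+z), s⁻¹ := by
      simpa using intervalIntegral.integral_comp_add_left (a := 0) (b := z)
        (fun s : ℝ => s⁻¹) y
    have h4 : (0:ℝ) ∉ Set.uIcc y (y+z) := by
      rw [Set.uIcc_of_le (by linarith)]
      intro h; exact absurd h.1 (by linarith)
    rw [h1, h2, h3, integral_inv h4]
    congr 1
    field_simp
  · filter_upwards [ae_restrict_mem measurableSet_Ioo] with t ht
    have := ht.1; positivity

lemma lint_main {α σ y : ℝ} (hα0 : 0 < α) (hα1 : α < 1) (hσ : 0 < σ) (hy : 0 < y) :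
    ∫⁻ z in Set.Ioi (0:ℝ),
      ENNReal.ofReal (Real.log (1 + z/y) * ((α * σ / Real.Gamma (1-α)) * z ^ (-(1+α))))
    = ENNReal.ofReal ((σ * Real.Gamma α) * y ^ (-α)) := by
  set μ0 : Measure ℝ := volume.restrict (Set.Ioi (0:ℝ)) with hμ0
  have hΓ : 0 < Real.Gamma (1-α) := Real.Gamma_pos_of_pos (by linarith)
  set K : ℝ := α * σ / Real.Gamma (1-α) with hKdef
  have hK : 0 < K := by positivity
  set c1 : ℝ := σ / Real.Gamma (1-α) with hc1def
  have hc1 : 0 < c1 := by positivity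
  set F : ℝ → ℝ → ℝ≥0∞ := fun z t =>
    Set.indicator (Set.Iio z)
      (fun t => ENNReal.ofReal ((y+t)⁻¹) * ENNReal.ofReal (K * z ^ (-(1+α)))) t with hFdef
  have hFmeas : Measurable (Function.uncurry F) := by
    have heq : Function.uncurry F = fun p : ℝ × ℝ =>
        Set.indicator {q : ℝ × ℝ | q.2 < q.1}
          (fun q => ENNReal.ofReal ((y+q.2)⁻¹) * ENNReal.ofReal (K * q.1 ^ (-(1+α)))) p := by
      ext p
      by_cases h : p.2 < p.1 <;>
        simp [Function.uncurry, hFdef, Set.indicator_apply, Set.mem_Iio, h]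
    rw [heq]
    apply Measurable.indicator
    · fun_prop
    · exact measurableSet_lt measurable_snd measurable_fst
  have step1 : ∫⁻ z in Set.Ioi (0:ℝ),
      ENNReal.ofReal (Real.log (1 + z/y) * (K * z ^ (-(1+α))))
      = ∫⁻ z, (∫⁻ t, F z t ∂μ0) ∂μ0 := by
    refine setLIntegral_congr_fun measurableSet_Ioi (fun z hz => ?_)
    have hz0 : (0:ℝ) < z := hz
    rw [hμ0, hFdef]
    simp only []
    rw [lintegral_indicator measurableSet_Iio, Measure.restrict_restrict measurableSet_Iio,
      Set.Iio_inter_Ioi,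
      lintegral_mul_const _ (by fun_prop), ← lint_log hy hz0,
      ← ENNReal.ofReal_mul (Real.log_nonneg (by
        have : 0 ≤ z / y := by positivity
        linarith))]
  have step2 : ∀ t ∈ Set.Ioi (0:ℝ),
      (∫⁻ z, F z t ∂μ0) = ENNReal.ofReal (c1 * t ^ (-α) * (y+t)⁻¹) := by
    intro t ht
    have ht0 : (0:ℝ) < t := ht
    have hFt : ∀ z, F z t = Set.indicator (Set.Ioi t)
        (fun z => ENNReal.ofReal ((y+t)⁻¹) * ENNReal.ofReal (K * z ^ (-(1+α)))) z := by
      intro z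
      by_cases h : t < z <;>
        simp [hFdef, Set.indicator_apply, Set.mem_Iio, Set.mem_Ioi, h]
    simp_rw [hFt]
    rw [hμ0, lintegral_indicator measurableSet_Ioi,
      Measure.restrict_restrict measurableSet_Ioi,
      Set.inter_eq_self_of_subset_left (Set.Ioi_subset_Ioi ht0.le),
      lintegral_const_mul _ (by fun_prop)]
    have : ∀ z : ℝ, ENNReal.ofReal (K * z ^ (-(1+α)))
        = ENNReal.ofReal K * ENNReal.ofReal (z ^ (-(1+α))) := fun z =>
      ENNReal.ofReal_mul hK.le
    simp_rw [this]
    rw [lintegral_const_mul _ (by fun_prop),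
      lint_rpow_Ioi hα0 ht0, ← ENNReal.ofReal_mul hK.le, ← ENNReal.ofReal_mul (by positivity)]
    congr 1
    rw [hKdef, hc1def]
    field_simp
  have swap1 := lintegral_lintegral_swap (μ := μ0) (ν := μ0) hFmeas.aemeasurable
  -- second double integral
  set G : ℝ → ℝ → ℝ≥0∞ := fun t s =>
    ENNReal.ofReal (c1 * t ^ (-α)) * ENNReal.ofReal (Real.exp (-((y+t)*s))) with hGdef
  have hGmeas : Measurable (Function.uncurry G) := by
    fun_prop
  have step3 : ∀ t ∈ Set.Ioi (0:ℝ),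
      ENNReal.ofReal (c1 * t ^ (-α) * (y+t)⁻¹) = ∫⁻ s, G t s ∂μ0 := by
    intro t ht
    have ht0 : (0:ℝ) < t := ht
    have hyt : 0 < y + t := by linarith
    have hg := lint_gamma (p := 1) (b := y + t) one_pos hyt
    simp only [sub_self, Real.rpow_zero, one_mul, Real.Gamma_one, mul_one,
      Real.rpow_one, one_div] at hg
    rw [hGdef]
    simp only []
    rw [lintegral_const_mul _ (by fun_prop), hg,
      ← ENNReal.ofReal_mul (by positivity)]
  have step4 : ∀ s ∈ Set.Ioi (0:ℝ),
      (∫⁻ t, G t s ∂μ0)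
        = ENNReal.ofReal (c1 * Real.Gamma (1-α))
          * ENNReal.ofReal (s ^ (α-1) * Real.exp (-(y*s))) := by
    intro s hs
    have hs0 : (0:ℝ) < s := hs
    have hcong : ∀ t ∈ Set.Ioi (0:ℝ), G t s
        = ENNReal.ofReal (c1 * Real.exp (-(y*s)))
          * ENNReal.ofReal (t ^ ((1-α)-1) * Real.exp (-(s*t))) := by
      intro t ht
      have ht0 : (0:ℝ) < t := ht
      rw [hGdef]
      simp only []
      rw [← ENNReal.ofReal_mul (by positivity), ← ENNReal.ofReal_mul (by positivity)]
      congr 1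
      rw [show (y+t)*s = y*s + s*t by ring, neg_add, Real.exp_add,
        show (1-α)-1 = -α by ring]
      ring
    rw [hμ0, setLIntegral_congr_fun measurableSet_Ioi hcong,
      lintegral_const_mul _ (by fun_prop),
      lint_gamma (by linarith : (0:ℝ) < 1-α) hs0]
    rw [← ENNReal.ofReal_mul (by positivity), ← ENNReal.ofReal_mul (by positivity)]
    congr 1
    rw [one_div, Real.inv_rpow hs0.le, ← Real.rpow_neg hs0.le, show -(1-α) = α-1 by ring]
    ring
  calc ∫⁻ z in Set.Ioi (0:ℝ),
        ENNReal.ofReal (Real.log (1 + z/y) * (K * z ^ (-(1+α))))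
      = ∫⁻ t, (∫⁻ z, F z t ∂μ0) ∂μ0 := by rw [step1, swap1]
    _ = ∫⁻ t, ENNReal.ofReal (c1 * t ^ (-α) * (y+t)⁻¹) ∂μ0 := by
        exact setLIntegral_congr_fun measurableSet_Ioi step2
    _ = ∫⁻ t, (∫⁻ s, G t s ∂μ0) ∂μ0 := by
        exact setLIntegral_congr_fun measurableSet_Ioi step3
    _ = ∫⁻ s, (∫⁻ t, G t s ∂μ0) ∂μ0 := lintegral_lintegral_swap hGmeas.aemeasurable
    _ = ∫⁻ s, (ENNReal.ofReal (c1 * Real.Gamma (1-α))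
          * ENNReal.ofReal (s ^ (α-1) * Real.exp (-(y*s)))) ∂μ0 := by
        exact setLIntegral_congr_fun measurableSet_Ioi step4
    _ = ENNReal.ofReal ((σ * Real.Gamma α) * y ^ (-α)) := by
        rw [lintegral_const_mul _ (by fun_prop),
          lint_gamma hα0 hy, ← ENNReal.ofReal_mul (by positivity)]
        congr 1
        rw [one_div, Real.inv_rpow hy.le, ← Real.rpow_neg hy.le, hc1def]
        field_simp

lemma rpow_one_add_le {x p : ℝ} (hx : 0 ≤ x) (hp0 : 0 ≤ p) (hp1 : p ≤ 1) :
    (1+x) ^ p ≤ 1 + x ^ p := by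
  have h := NNReal.rpow_add_le_add_rpow 1 x.toNNReal hp0 hp1
  have hc := NNReal.coe_le_coe.2 h
  push_cast [Real.coe_toNNReal _ hx] at hc
  simpa using hc

example (a b : ℝ) (h : a ≤ b) (ha : 0 < a) : Real.log a ≤ Real.log b := Real.log_le_log ha h

example : Filter.IsBoundedUnder (· ≥ ·) Filter.atTop (fun x : ℝ => ((x:ℝ) : EReal)) := by
  isBoundedDefault

lemma aeIoi {α σ : ℝ} : ∀ᵐ z ∂((muStable α σ).restrict (Set.Ioi 0)), z ∈ Set.Ioi (0:ℝ) := by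
  have hres : (muStable α σ).restrict (Set.Ioi 0)
      = (volume.restrict (Set.Ioi (0:ℝ))).withDensity
        (fun z => ENNReal.ofReal ((α * σ / Real.Gamma (1 - α)) * z ^ (-(1 + α)))) := by
    rw [muStable, restrict_withDensity measurableSet_Ioi,
      Measure.restrict_restrict measurableSet_Ioi, Set.inter_self]
  rw [hres]
  exact (withDensity_absolutelyContinuous _ _).ae_le (ae_restrict_mem measurableSet_Ioi)

lemma lint_log_muStable {α σ y : ℝ} (hα0 : 0 < α) (hα1 : α < 1) (hσ : 0 < σ) (hy : 0 < y) :
    ∫⁻ z, ENNReal.ofReal (Real.log (1 + z/y)) ∂((muStable α σ).restrict (Set.Ioi 0))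
      = ENNReal.ofReal ((σ * Real.Gamma α) * y ^ (-α)) := by
  have hΓ : 0 < Real.Gamma (1-α) := Real.Gamma_pos_of_pos (by linarith)
  have hK : 0 ≤ α * σ / Real.Gamma (1-α) := by positivity
  have hres : (muStable α σ).restrict (Set.Ioi 0)
      = (volume.restrict (Set.Ioi (0:ℝ))).withDensity
        (fun z => ENNReal.ofReal ((α * σ / Real.Gamma (1 - α)) * z ^ (-(1 + α)))) := by
    rw [muStable, restrict_withDensity measurableSet_Ioi,
      Measure.restrict_restrict measurableSet_Ioi, Set.inter_self]
  have hmlog : Measurable fun z : ℝ => ENNReal.ofReal (Real.log (1 + z/y)) :=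
    ENNReal.measurable_ofReal.comp (Real.measurable_log.comp (by fun_prop))
  rw [hres, lintegral_withDensity_eq_lintegral_mul _ (by fun_prop) hmlog]
  rw [← lint_main hα0 hα1 hσ hy]
  refine setLIntegral_congr_fun measurableSet_Ioi (fun z hz => ?_)
  have hz0 : (0:ℝ) < z := hz
  simp only [Pi.mul_apply]
  rw [← ENNReal.ofReal_mul (by positivity), mul_comm]

lemma integrable_log_muStable {α σ y : ℝ} (hα0 : 0 < α) (hα1 : α < 1) (hσ : 0 < σ)
    (hy : 0 < y) :
    Integrable (fun z => Real.log (1 + z/y)) ((muStable α σ).restrict (Set.Ioi 0)) := by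
  have hae : ∀ᵐ z ∂((muStable α σ).restrict (Set.Ioi 0)), z ∈ Set.Ioi (0:ℝ) := by
    have hres : (muStable α σ).restrict (Set.Ioi 0)
        = (volume.restrict (Set.Ioi (0:ℝ))).withDensity
          (fun z => ENNReal.ofReal ((α * σ / Real.Gamma (1 - α)) * z ^ (-(1 + α)))) := by
      rw [muStable, restrict_withDensity measurableSet_Ioi,
        Measure.restrict_restrict measurableSet_Ioi, Set.inter_self]
    rw [hres]
    exact (withDensity_absolutelyContinuous _ _).ae_le (ae_restrict_mem measurableSet_Ioi)
  have hnn : 0 ≤ᵐ[(muStable α σ).restrict (Set.Ioi 0)] fun z => Real.log (1 + z/y) := by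
    filter_upwards [hae] with z hz
    have hz0 : (0:ℝ) < z := hz
    exact Real.log_nonneg (by nlinarith [div_nonneg hz0.le hy.le])
  refine ⟨(Real.measurable_log.comp (by fun_prop) :
    Measurable fun z : ℝ => Real.log (1 + z/y)).aestronglyMeasurable, ?_⟩
  rw [hasFiniteIntegral_iff_ofReal hnn, lint_log_muStable hα0 hα1 hσ hy]
  exact ENNReal.ofReal_lt_top

lemma integral_log_muStable {α σ y : ℝ} (hα0 : 0 < α) (hα1 : α < 1) (hσ : 0 < σ)
    (hy : 0 < y) :
    ∫ z in Set.Ioi (0:ℝ), Real.log (1 + z/y) ∂(muStable α σ)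
      = (σ * Real.Gamma α) * y ^ (-α) := by
  have hΓα : 0 < Real.Gamma α := Real.Gamma_pos_of_pos hα0
  have hae : ∀ᵐ z ∂((muStable α σ).restrict (Set.Ioi 0)), z ∈ Set.Ioi (0:ℝ) := by
    have hres : (muStable α σ).restrict (Set.Ioi 0)
        = (volume.restrict (Set.Ioi (0:ℝ))).withDensity
          (fun z => ENNReal.ofReal ((α * σ / Real.Gamma (1 - α)) * z ^ (-(1 + α)))) := by
      rw [muStable, restrict_withDensity measurableSet_Ioi,
        Measure.restrict_restrict measurableSet_Ioi, Set.inter_self]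
    rw [hres]
    exact (withDensity_absolutelyContinuous _ _).ae_le (ae_restrict_mem measurableSet_Ioi)
  have hnn : 0 ≤ᵐ[(muStable α σ).restrict (Set.Ioi 0)] fun z => Real.log (1 + z/y) := by
    filter_upwards [hae] with z hz
    have hz0 : (0:ℝ) < z := hz
    exact Real.log_nonneg (by nlinarith [div_nonneg hz0.le hy.le])
  rw [integral_eq_lintegral_of_nonneg_ae hnn
    (Real.measurable_log.comp (by fun_prop) :
      Measurable fun z : ℝ => Real.log (1 + z/y)).aestronglyMeasurable,
    lint_log_muStable hα0 hα1 hσ hy, ENNReal.toReal_ofReal (by positivity)]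

lemma T2bound {α σ x : ℝ} (hα0 : 0 < α) (hα1 : α < 1) (hσ : 0 < σ) (hx : 0 ≤ x) :
    x * (∫ z in Set.Ioi (0:ℝ),
        (Real.log (1 + z / (1 + x)) - (z / (1 + x)) * (if z ≤ 1 then 1 else 0))
        ∂(muStable α σ))
      ≤ (σ * Real.Gamma α) * (x * (1 + x) ^ (-α)) := by
  have hy0 : (0:ℝ) < 1 + x := by linarith
  have hΓα : 0 < Real.Gamma α := Real.Gamma_pos_of_pos hα0
  have hval := integral_log_muStable (y := 1 + x) hα0 hα1 hσ hy0
  have hIle : (∫ z in Set.Ioi (0:ℝ),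
      (Real.log (1 + z / (1 + x)) - (z / (1 + x)) * (if z ≤ 1 then 1 else 0))
      ∂(muStable α σ)) ≤ ∫ z in Set.Ioi (0:ℝ), Real.log (1 + z / (1 + x)) ∂(muStable α σ) := by
    by_cases hf : Integrable
        (fun z => Real.log (1 + z / (1 + x)) - (z / (1 + x)) * (if z ≤ 1 then 1 else 0))
        ((muStable α σ).restrict (Set.Ioi 0))
    · refine integral_mono_ae hf (integrable_log_muStable hα0 hα1 hσ hy0) ?_
      filter_upwards [aeIoi] with z hz
      have hz0 : (0:ℝ) < z := hz
      have : 0 ≤ (z / (1 + x)) * (if z ≤ 1 then 1 else 0) := by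
        refine mul_nonneg (by positivity) ?_
        split <;> norm_num
      linarith
    · rw [integral_undef hf]
      refine integral_nonneg_of_ae ?_
      filter_upwards [aeIoi] with z hz
      have hz0 : (0:ℝ) < z := hz
      exact Real.log_nonneg (by nlinarith [div_nonneg hz0.le hy0.le])
  calc x * (∫ z in Set.Ioi (0:ℝ),
        (Real.log (1 + z / (1 + x)) - (z / (1 + x)) * (if z ≤ 1 then 1 else 0))
        ∂(muStable α σ))
      ≤ x * ∫ z in Set.Ioi (0:ℝ), Real.log (1 + z / (1 + x)) ∂(muStable α σ) :=
        mul_le_mul_of_nonneg_left hIle hx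
    _ = (σ * Real.Gamma α) * (x * (1 + x) ^ (-α)) := by rw [hval]; ring

lemma T4bound {ν : Measure ℝ}
    (hνloc : ∫⁻ z, ENNReal.ofReal (min 1 z) ∂ν < ⊤)
    (hνlog : ∫⁻ z in Set.Ioi (1 : ℝ), ENNReal.ofReal (Real.log (1 + z)) ∂ν < ⊤) :
    ∃ M : ℝ, 0 ≤ M ∧ ∀ x : ℝ, 0 ≤ x →
      (∫ z in Set.Ioi (0:ℝ), Real.log (1 + z / (1 + x)) ∂ν) ≤ M := by
  set A := ∫⁻ z, ENNReal.ofReal (min 1 z) ∂ν with hA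
  set B := ∫⁻ z in Set.Ioi (1 : ℝ), ENNReal.ofReal (Real.log (1 + z)) ∂ν with hB
  refine ⟨(A + B).toReal, ENNReal.toReal_nonneg, fun x hx => ?_⟩
  have hy0 : (0:ℝ) < 1 + x := by linarith
  have hy1 : (1:ℝ) ≤ 1 + x := by linarith
  have hnn : 0 ≤ᵐ[ν.restrict (Set.Ioi 0)] fun z => Real.log (1 + z / (1 + x)) := by
    filter_upwards [ae_restrict_mem measurableSet_Ioi] with z hz
    have hz0 : (0:ℝ) < z := hz
    exact Real.log_nonneg (by nlinarith [div_nonneg hz0.le hy0.le])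
  rw [integral_eq_lintegral_of_nonneg_ae hnn
    (Real.measurable_log.comp (by fun_prop) :
      Measurable fun z : ℝ => Real.log (1 + z / (1 + x))).aestronglyMeasurable]
  have hle : ∫⁻ z in Set.Ioi (0:ℝ), ENNReal.ofReal (Real.log (1 + z / (1 + x))) ∂ν
      ≤ A + B := by
    rw [← Set.Ioc_union_Ioi_eq_Ioi (zero_le_one (α := ℝ)),
      lintegral_union measurableSet_Ioi (Set.Ioc_disjoint_Ioi le_rfl)]
    refine add_le_add ?_ ?_
    · refine le_trans (setLIntegral_mono' measurableSet_Ioc (fun z hz => ?_))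
        (setLIntegral_le_lintegral _ _)
      refine ENNReal.ofReal_le_ofReal ?_
      have hz0 : (0:ℝ) < z := hz.1
      have h1 : Real.log (1 + z / (1 + x)) ≤ z / (1 + x) := by
        have := Real.log_le_sub_one_of_pos
          (show (0:ℝ) < 1 + z / (1 + x) by positivity)
        linarith
      have h2 : z / (1 + x) ≤ z := div_le_self hz0.le hy1
      have h3 : min 1 z = z := min_eq_right hz.2
      linarith
    · refine setLIntegral_mono' measurableSet_Ioi (fun z hz => ?_)
      refine ENNReal.ofReal_le_ofReal ?_
      have hz1 : (1:ℝ) < z := hz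
      refine Real.log_le_log (by positivity) ?_
      have : z / (1 + x) ≤ z := div_le_self (by linarith) hy1
      linarith
  refine le_trans (ENNReal.toReal_mono ?_ hle) le_rfl
  exact (ENNReal.add_lt_top.2 ⟨hνloc, hνlog⟩).ne

lemma log_le_rpow {α x : ℝ} (hα0 : 0 < α) (hα1 : α < 1) (hx : 1 ≤ x) :
    Real.log (1 + x) ≤ (2 - α) / (1 - α) * x ^ (1 - α) := by
  have hx0 : (0:ℝ) < x := by linarith
  have hrp : (0:ℝ) < x ^ (1 - α) := Real.rpow_pos_of_pos hx0 _
  have e1 : Real.log (1 + x) ≤ Real.log (2 * x) :=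
    Real.log_le_log (by linarith) (by linarith)
  have e2 : Real.log (2 * x) = Real.log 2 + Real.log x :=
    Real.log_mul (by norm_num) (by linarith)
  have e3 : Real.log 2 ≤ 1 := by
    have := Real.log_le_sub_one_of_pos (show (0:ℝ) < 2 by norm_num); linarith
  have e4 : Real.log (x ^ (1 - α)) = (1 - α) * Real.log x := Real.log_rpow hx0 _
  have e5 : Real.log (x ^ (1 - α)) ≤ x ^ (1 - α) := by
    have := Real.log_le_sub_one_of_pos hrp; linarith
  have e6 : (1:ℝ) ≤ x ^ (1 - α) := by
    have := Real.rpow_le_rpow_of_exponent_le hx (show (0:ℝ) ≤ 1 - α by linarith)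
    simpa using this
  have hlogx : 0 ≤ Real.log x := Real.log_nonneg hx
  rw [div_mul_eq_mul_div, le_div_iff₀ (by linarith : (0:ℝ) < 1 - α)]
  nlinarith

/- Corollary 1.5 of Li–Li–Wang–Zhou, Lyapunov part for `0 < α < 1`: let
`σ > 0`, `a ∈ ℝ`, `c ≥ 0`, `β ≥ 0`, let `ν` satisfy `∫(1∧z)ν(dz) < ∞` and
`∫₁^∞ log(1+z)ν(dz) < ∞`, let `g` be a competition mechanism, and take
`b = a + ασ/((1−α)Γ(1−α))` and `μ(dz) = ασ Γ(1−α)⁻¹ z^{−1−α} dz` in the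
generator `L`.  If `liminf_{x→∞} g(x)/x^{2−α} > σπ/(Γ(1−α) sin(απ))`, then
`V_log(x) = log(1+x)` is a Lyapunov function: there are `C₀ > 0` and `C₁ > 0`
with `LV_log(x) ≤ C₀ − C₁ log(1+x)` for all `x ≥ 0`. -/
set_option maxHeartbeats 1000000 in
theorem lyapunov_Vlog_stable
    (α σ a c β : ℝ) (hα0 : 0 < α) (hα1 : α < 1) (hσ : 0 < σ) (hc : 0 ≤ c) (hβ : 0 ≤ β)
    (ν : Measure ℝ) (hνsupp : ν (Set.Iic 0) = 0)
    (hνloc : ∫⁻ z, ENNReal.ofReal (min 1 z) ∂ν < ⊤)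
    (hνlog : ∫⁻ z in Set.Ioi (1 : ℝ), ENNReal.ofReal (Real.log (1 + z)) ∂ν < ⊤)
    (g : ℝ → ℝ) (hg0 : g 0 = 0) (hgmono : MonotoneOn g (Set.Ici 0))
    (hgcont : ContinuousOn g (Set.Ici 0)) (hgnonneg : ∀ x ∈ Set.Ici (0 : ℝ), 0 ≤ g x)
    (hliminf : ((σ * Real.pi / (Real.Gamma (1 - α) * Real.sin (α * Real.pi)) : ℝ) : EReal)
      < Filter.liminf (fun x : ℝ => ((g x / x ^ (2 - α) : ℝ) : EReal)) Filter.atTop) :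
    ∃ C₀ > (0 : ℝ), ∃ C₁ > (0 : ℝ), ∀ x : ℝ, 0 ≤ x →
      -c / (1 + x) ^ 2
          + x * (∫ z in Set.Ioi (0 : ℝ),
              (Real.log (1 + z / (1 + x))
                - (z / (1 + x)) * (if z ≤ 1 then 1 else 0)) ∂(muStable α σ))
          + (β - (a + α * σ / ((1 - α) * Real.Gamma (1 - α))) * x - g x) / (1 + x)
          + (∫ z in Set.Ioi (0 : ℝ), Real.log (1 + z / (1 + x)) ∂ν)
        ≤ C₀ - C₁ * Real.log (1 + x) := by
  have hΓ1 : 0 < Real.Gamma (1 - α) := Real.Gamma_pos_of_pos (by linarith)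
  have hΓα : 0 < Real.Gamma α := Real.Gamma_pos_of_pos hα0
  have hsin : 0 < Real.sin (α * Real.pi) := by
    rw [mul_comm]
    exact Real.sin_pos_of_pos_of_lt_pi (by positivity)
      (by nlinarith [Real.pi_pos])
  obtain ⟨Cα, hCαdef⟩ : ∃ q : ℝ, q = σ * Real.pi / (Real.Gamma (1 - α) * Real.sin (α * Real.pi)) :=
    ⟨_, rfl⟩
  rw [← hCαdef] at hliminf
  have hCα : Cα = σ * Real.Gamma α := by
    have hrefl := Real.Gamma_mul_Gamma_one_sub α
    have hs : Real.sin (Real.pi * α) ≠ 0 := by rw [mul_comm]; exact hsin.ne'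
    have hπ : Real.Gamma α * Real.Gamma (1 - α) * Real.sin (Real.pi * α) = Real.pi := by
      rw [eq_div_iff hs] at hrefl
      linarith [hrefl]
    rw [hCαdef, mul_comm α Real.pi, div_eq_iff (mul_ne_zero hΓ1.ne' hs)]
    linear_combination (-σ) * hπ
  have hCαpos : 0 < Cα := by rw [hCα]; positivity
  obtain ⟨r, hr1, hr2⟩ := EReal.exists_between_coe_real hliminf
  have hr1' : Cα < r := by exact_mod_cast hr1
  have hev : ∀ᶠ x : ℝ in Filter.atTop, (r : EReal) < ((g x / x ^ (2 - α) : ℝ) : EReal) :=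
    Filter.eventually_lt_of_lt_liminf hr2
  obtain ⟨x₀, hx₀⟩ := Filter.eventually_atTop.1 hev
  obtain ⟨x₁, hx₁def⟩ : ∃ q : ℝ, q = max x₀ 1 := ⟨_, rfl⟩
  have hx₁1 : (1:ℝ) ≤ x₁ := hx₁def ▸ le_max_right _ _
  obtain ⟨M, hM0, hM⟩ := T4bound hνloc hνlog
  obtain ⟨B, hBdef⟩ : ∃ q : ℝ, q = β + |a| + M + Cα := ⟨_, rfl⟩
  have hB0 : 0 ≤ B := by
    have := abs_nonneg a; rw [hBdef]; linarith
  obtain ⟨C₁, hC₁def⟩ : ∃ q : ℝ, q = (r - Cα) * (1 - α) / (2 * (2 - α)) := ⟨_, rfl⟩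
  have hC₁ : 0 < C₁ := by
    rw [hC₁def]
    exact div_pos (mul_pos (by linarith) (by linarith)) (by linarith)
  have hlog₁ : 0 ≤ Real.log (1 + x₁) := Real.log_nonneg (by linarith)
  obtain ⟨C₀, hC₀def⟩ : ∃ q : ℝ, q = B + Cα * x₁ + C₁ * Real.log (1 + x₁) + 1 := ⟨_, rfl⟩
  have hC₀ : 0 < C₀ := by
    rw [hC₀def]
    nlinarith [mul_nonneg hCαpos.le (le_trans zero_le_one hx₁1),
      mul_nonneg hC₁.le hlog₁]
  refine ⟨C₀, hC₀, C₁, hC₁, fun x hx => ?_⟩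
  have hy0 : (0:ℝ) < 1 + x := by linarith
  -- term bounds
  have h1 : -c / (1 + x) ^ 2 ≤ 0 := by
    rw [neg_div]
    have : 0 ≤ c / (1 + x) ^ 2 := div_nonneg hc (by positivity)
    linarith
  have h2 : x * (∫ z in Set.Ioi (0 : ℝ),
      (Real.log (1 + z / (1 + x))
        - (z / (1 + x)) * (if z ≤ 1 then 1 else 0)) ∂(muStable α σ))
      ≤ Cα * (x * (1 + x) ^ (-α)) := by
    rw [hCα]; exact T2bound hα0 hα1 hσ hx
  have h4 : (∫ z in Set.Ioi (0 : ℝ), Real.log (1 + z / (1 + x)) ∂ν) ≤ M := hM x hx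
  have h3 : (β - (a + α * σ / ((1 - α) * Real.Gamma (1 - α))) * x - g x) / (1 + x)
      ≤ β + |a| - g x / (1 + x) := by
    have hD : 0 ≤ α * σ / ((1 - α) * Real.Gamma (1 - α)) :=
      le_of_lt (div_pos (by positivity) (mul_pos (by linarith) hΓ1))
    have hsplit : (β - (a + α * σ / ((1 - α) * Real.Gamma (1 - α))) * x - g x) / (1 + x)
        = (β - (a + α * σ / ((1 - α) * Real.Gamma (1 - α))) * x) / (1 + x)
          - g x / (1 + x) := by ring
    rw [hsplit]
    have : (β - (a + α * σ / ((1 - α) * Real.Gamma (1 - α))) * x) / (1 + x) ≤ β + |a| := by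
      rw [div_le_iff₀ hy0]
      nlinarith [abs_nonneg a, neg_abs_le a, le_abs_self a]
    linarith
  have hgx0 : 0 ≤ g x := hgnonneg x hx
  have hgxdiv : 0 ≤ g x / (1 + x) := div_nonneg hgx0 hy0.le
  rcases le_or_gt x₁ x with hcase | hcase
  · -- large x
    have hx1 : (1:ℝ) ≤ x := le_trans hx₁1 hcase
    have hx0' : (0:ℝ) < x := by linarith
    have hgr : r < g x / x ^ (2 - α) := by
      have hle : x₀ ≤ x := by
        rw [hx₁def] at hcase
        exact le_trans (le_max_left _ _) hcase
      have := hx₀ x hle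
      exact_mod_cast this
    have hpow2 : (0:ℝ) < x ^ (2 - α) := Real.rpow_pos_of_pos hx0' _
    have hglb : r * x ^ (2 - α) ≤ g x := by
      rw [← le_div_iff₀ hpow2]; exact hgr.le
    have hpow1 : (0:ℝ) < x ^ (1 - α) := Real.rpow_pos_of_pos hx0' _
    have hsplit2 : x ^ (2 - α) = x * x ^ (1 - α) := by
      rw [show (2 - α : ℝ) = 1 + (1 - α) by ring, Real.rpow_add hx0', Real.rpow_one]
    have hsplity : (1 + x) ^ (1 - α : ℝ) = (1 + x) * (1 + x) ^ (-α : ℝ) := by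
      rw [show (1 - α : ℝ) = 1 + (-α) by ring, Real.rpow_add hy0, Real.rpow_one]
    have hmono : x ^ (1 - α : ℝ) ≤ (1 + x) ^ (1 - α : ℝ) :=
      Real.rpow_le_rpow hx0'.le (by linarith) (by linarith)
    have hsub : (1 + x) ^ (1 - α : ℝ) ≤ 1 + x ^ (1 - α : ℝ) :=
      rpow_one_add_le hx0'.le (by linarith) (by linarith)
    -- bracket bound : x*(1+x)^(-α) - x^(2-α)/(1+x) ≤ 1
    have hb1 : x * (1 + x) ^ (-α : ℝ) - x ^ (2 - α : ℝ) / (1 + x) ≤ 1 := by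
      have e1 : x * (1 + x) ^ (-α : ℝ) = (x / (1 + x)) * (1 + x) ^ (1 - α : ℝ) := by
        rw [hsplity]; field_simp
      have e2 : x ^ (2 - α : ℝ) / (1 + x) = (x / (1 + x)) * x ^ (1 - α : ℝ) := by
        rw [hsplit2]; ring
      rw [e1, e2, ← mul_sub]
      have hfrac : x / (1 + x) ≤ 1 := by
        rw [div_le_one hy0]; linarith
      have hfrac0 : 0 ≤ x / (1 + x) := by positivity
      have hdiff : (1 + x) ^ (1 - α : ℝ) - x ^ (1 - α : ℝ) ≤ 1 := by linarith
      have hdiff0 : 0 ≤ (1 + x) ^ (1 - α : ℝ) - x ^ (1 - α : ℝ) := by linarith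
      nlinarith
    -- hb2 : x^(1-α)/2 ≤ x^(2-α)/(1+x)
    have hb2 : x ^ (1 - α : ℝ) / 2 ≤ x ^ (2 - α : ℝ) / (1 + x) := by
      rw [div_le_div_iff₀ (by norm_num) hy0, hsplit2]
      nlinarith
    have hb3 : Real.log (1 + x) ≤ (2 - α) / (1 - α) * x ^ (1 - α) :=
      log_le_rpow hα0 hα1 hx1
    have t1 : r * x ^ (2 - α : ℝ) / (1 + x) ≤ g x / (1 + x) := by
      gcongr
    have hc₁id : C₁ * ((2 - α) / (1 - α)) = (r - Cα) / 2 := by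
      rw [hC₁def]
      rw [div_mul_div_comm, div_eq_div_iff (by nlinarith) (by norm_num)]
      ring
    have t2 : C₁ * Real.log (1 + x) ≤ (r - Cα) / 2 * x ^ (1 - α : ℝ) := by
      calc C₁ * Real.log (1 + x) ≤ C₁ * ((2 - α) / (1 - α) * x ^ (1 - α : ℝ)) :=
            mul_le_mul_of_nonneg_left hb3 hC₁.le
        _ = (r - Cα) / 2 * x ^ (1 - α : ℝ) := by rw [← mul_assoc, hc₁id]
    have t3 : Cα * (x * (1 + x) ^ (-α : ℝ) - x ^ (2 - α : ℝ) / (1 + x)) ≤ Cα := by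
      have := mul_le_mul_of_nonneg_left hb1 hCαpos.le
      linarith [this]
    have t4 : (r - Cα) * (x ^ (1 - α : ℝ) / 2) ≤ (r - Cα) * (x ^ (2 - α : ℝ) / (1 + x)) :=
      mul_le_mul_of_nonneg_left hb2 (by linarith)
    have tid : Cα * (x * (1 + x) ^ (-α : ℝ)) - r * x ^ (2 - α : ℝ) / (1 + x)
        = Cα * (x * (1 + x) ^ (-α : ℝ) - x ^ (2 - α : ℝ) / (1 + x))
          - (r - Cα) * (x ^ (2 - α : ℝ) / (1 + x)) := by ring
    have t2' : (r - Cα) / 2 * x ^ (1 - α : ℝ) = (r - Cα) * (x ^ (1 - α : ℝ) / 2) := by ring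
    have hkey : Cα * (x * (1 + x) ^ (-α : ℝ)) - g x / (1 + x)
        ≤ Cα - C₁ * Real.log (1 + x) := by linarith
    have hextra : 0 ≤ Cα * x₁ := mul_nonneg hCαpos.le (by linarith)
    have hextra2 : 0 ≤ C₁ * Real.log (1 + x₁) := mul_nonneg hC₁.le hlog₁
    rw [hC₀def, hBdef]
    linarith
  · -- small x
    have hxx : x ≤ x₁ := hcase.le
    have hone : (1 + x) ^ (-α : ℝ) ≤ 1 :=
      Real.rpow_le_one_of_one_le_of_nonpos (by linarith) (by linarith)
    have hle1 : x * (1 + x) ^ (-α : ℝ) ≤ x := by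
      nlinarith [mul_le_mul_of_nonneg_left hone hx]
    have hCx : Cα * (x * (1 + x) ^ (-α : ℝ)) ≤ Cα * x₁ := by
      have := mul_le_mul_of_nonneg_left (le_trans hle1 hxx) hCαpos.le
      linarith
    have hlx : Real.log (1 + x) ≤ Real.log (1 + x₁) :=
      Real.log_le_log (by linarith) (by linarith)
    have hlx' : C₁ * Real.log (1 + x) ≤ C₁ * Real.log (1 + x₁) :=
      mul_le_mul_of_nonneg_left hlx hC₁.le
    rw [hC₀def, hBdef]
    linarith

end Aux
end
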